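/- arXiv:1903.00974 — 8 statements merged into one kernel-verified Lean document; each statement's English description precedes it below -/
import Mathlib

section
/- (Deterministic anytime online-to-batch, core of Theorem 1.) If ℒ : E → ℝ is convex and for each 1 ≤ t ≤ T the vector g_t satisfies g_t ∈ ∂ℒ(x_t), then for every x⋆ ∈ D: α_{1:T} (ℒ(x_T) − ℒ(x⋆)) ≤ Σ_{t=1}^T α_t ⟨g_t, w_t − x⋆⟩. -/
open scoped RealInnerProductSpace

/-- Deterministic anytime online-to-batch, core of Theorem 1. -/
theorem anytime_online_to_batch_deterministic
    {E : Type*} [NormedAddCommGroup E] [InnerProductSpace ℝ E]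
    (D : Set E) (hD : Convex ℝ D)
    (T : ℕ) (hT : 1 ≤ T)
    (α : ℕ → ℝ) (hα : ∀ t, 1 ≤ t → t ≤ T → 0 ≤ α t) (hα1 : 0 < α 1)
    (w : ℕ → E) (hw : ∀ t, 1 ≤ t → t ≤ T → w t ∈ D)
    (x : ℕ → E)
    (hx : ∀ t, 1 ≤ t → t ≤ T →
      x t = (∑ i ∈ Finset.Icc 1 t, α i)⁻¹ • ∑ i ∈ Finset.Icc 1 t, α i • w i)
    (f : E → ℝ) (hconv : ConvexOn ℝ Set.univ f)
    (g : ℕ → E)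
    (hg : ∀ t, 1 ≤ t → t ≤ T → ∀ y : E, f y ≥ f (x t) + ⟪g t, y - x t⟫)
    (xstar : E) (hxstar : xstar ∈ D) :
    (∑ t ∈ Finset.Icc 1 T, α t) * (f (x T) - f xstar)
      ≤ ∑ t ∈ Finset.Icc 1 T, α t * ⟪g t, w t - xstar⟫ := by
  have hAnn : ∀ t, t ≤ T → 0 ≤ ∑ i ∈ Finset.Icc 1 t, α i := by
    intro t h2
    exact Finset.sum_nonneg fun i hi =>
      hα i (Finset.mem_Icc.mp hi).1 (le_trans (Finset.mem_Icc.mp hi).2 h2)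
  have hApos : ∀ t, 1 ≤ t → t ≤ T → 0 < ∑ i ∈ Finset.Icc 1 t, α i := by
    intro t h1 h2
    have hle : α 1 ≤ ∑ i ∈ Finset.Icc 1 t, α i :=
      Finset.single_le_sum
        (fun i hi => hα i (Finset.mem_Icc.mp hi).1 (le_trans (Finset.mem_Icc.mp hi).2 h2))
        (Finset.mem_Icc.mpr ⟨le_rfl, h1⟩)
    linarith
  have hS : ∀ t, 1 ≤ t → t ≤ T →
      (∑ i ∈ Finset.Icc 1 t, α i) • x t = ∑ i ∈ Finset.Icc 1 t, α i • w i := by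
    intro t h1 h2
    rw [hx t h1 h2, smul_inv_smul₀ (hApos t h1 h2).ne']
  have hsub : ∀ t, 1 ≤ t → t ≤ T → ∀ y, f (x t) - f y ≤ ⟪g t, x t - y⟫ := by
    intro t h1 h2 y
    have h := hg t h1 h2 y
    have e : ⟪g t, x t - y⟫ = -⟪g t, y - x t⟫ := by
      rw [show x t - y = -(y - x t) from (neg_sub _ _).symm, inner_neg_right]
    rw [e]; linarith
  have key : ∀ t, 1 ≤ t → t ≤ T →
      (∑ i ∈ Finset.Icc 1 t, α i) * (f (x t) - f xstar)
        ≤ ∑ i ∈ Finset.Icc 1 t, α i * ⟪g i, w i - xstar⟫ := by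
    intro t h1
    induction t, h1 using Nat.le_induction with
    | base =>
      intro hT1
      simp only [Finset.Icc_self, Finset.sum_singleton]
      have hx1 : x 1 = w 1 := by
        rw [hx 1 le_rfl hT1]
        simp [Finset.Icc_self, inv_smul_smul₀ hα1.ne']
      have h := hsub 1 le_rfl hT1 xstar
      rw [hx1] at h ⊢
      exact mul_le_mul_of_nonneg_left h hα1.le
    | succ n hn ih =>
      intro hnT
      have hnT' : n ≤ T := by omega
      have ihn := ih hnT'
      have e1 := hS n hn hnT'
      have e2 := hS (n + 1) (by omega) hnT
      rw [Finset.sum_Icc_succ_top (by omega : 1 ≤ n + 1),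
          Finset.sum_Icc_succ_top (by omega : 1 ≤ n + 1), ← e1] at e2
      -- e2 : (An + α (n+1)) • x (n+1) = An • x n + α (n+1) • w (n+1)
      have hvec : α (n + 1) • (w (n + 1) - xstar)
          = α (n + 1) • (x (n + 1) - xstar)
            + (∑ i ∈ Finset.Icc 1 n, α i) • (x (n + 1) - x n) := by
        have e2' : ((∑ i ∈ Finset.Icc 1 n, α i) + α (n + 1)) • x (n + 1)
            = (∑ i ∈ Finset.Icc 1 n, α i) • x n + α (n + 1) • w (n + 1) := e2
        linear_combination (norm := module) -e2'
      have hinner : α (n + 1) * ⟪g (n + 1), w (n + 1) - xstar⟫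
          = α (n + 1) * ⟪g (n + 1), x (n + 1) - xstar⟫
            + (∑ i ∈ Finset.Icc 1 n, α i) * ⟪g (n + 1), x (n + 1) - x n⟫ := by
        rw [← real_inner_smul_right, ← real_inner_smul_right, ← real_inner_smul_right,
          ← inner_add_right, hvec]
      have s1 := hsub (n + 1) (by omega) hnT xstar
      have s2 := hsub (n + 1) (by omega) hnT (x n)
      have m1 := mul_le_mul_of_nonneg_left s1 (hα (n + 1) (by omega) hnT)
      have m2 := mul_le_mul_of_nonneg_left s2 (hAnn n hnT')
      rw [Finset.sum_Icc_succ_top (by omega : 1 ≤ n + 1),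
          Finset.sum_Icc_succ_top (by omega : 1 ≤ n + 1)]
      nlinarith [ihn, m1, m2, hinner]
  exact key T hT le_rfl
end

section
/- (Theorem 1, in-expectation version.) Let (Ω, ℱ, P) be a probability space with a filtration (ℱ_t)_{t=1}^T, and let w_1,…,w_T : Ω → D and g_1,…,g_T : Ω → E be random variables, suitably integrable, such that for each t the variables w_1,…,w_t (hence x_t) are ℱ_t-measurable and g_1,…,g_{t−1} are ℱ_t-measurable. Suppose ℒ : E → ℝ is convex and that almost surely the conditional expectation G_t = E[g_t | ℱ_t] satisfies G_t ∈ ∂ℒ(x_t). Then for every x⋆ ∈ D: E[α_{1:T}(ℒ(x_T) − ℒ(x⋆))] ≤ E[Σ_{t=1}^T α_t ⟨g_t, w_t − x⋆⟩]. -/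
open MeasureTheory Filter Topology
open scoped RealInnerProductSpace

section Aux

variable {Ω : Type*} {E : Type*} [NormedAddCommGroup E] [InnerProductSpace ℝ E] [CompleteSpace E]
  {m m0 : MeasurableSpace Ω} {P : Measure Ω}

theorem aux_integrable_inner_of_bound {h g : Ω → E} (hh : AEStronglyMeasurable h P)
    (hg : Integrable g P) (c : ℝ) (hbound : ∀ᵐ ω ∂P, ‖h ω‖ ≤ c) :
    Integrable (fun ω => ⟪h ω, g ω⟫) P := by
  refine (hg.norm.const_mul c).mono' (hh.inner hg.1) ?_
  filter_upwards [hbound] with ω hω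
  calc ‖⟪h ω, g ω⟫‖ ≤ ‖h ω‖ * ‖g ω‖ := by
        rw [Real.norm_eq_abs]; exact abs_real_inner_le_norm _ _
    _ ≤ c * ‖g ω‖ := mul_le_mul_of_nonneg_right hω (norm_nonneg _)

theorem aux_condexp_clm_comm {F G : Type*} [NormedAddCommGroup F] [NormedSpace ℝ F]
    [CompleteSpace F] [NormedAddCommGroup G] [NormedSpace ℝ G] [CompleteSpace G]
    (hm : m ≤ m0) [SigmaFinite (P.trim hm)]
    (L : F →L[ℝ] G) {g : Ω → F} (hg : Integrable g P) :
    (fun ω => L ((P[g|m]) ω)) =ᵐ[P] P[fun ω => L (g ω)|m] := by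
  refine ae_eq_condExp_of_forall_setIntegral_eq hm (L.integrable_comp hg)
    (fun s _ _ => (L.integrable_comp integrable_condExp).integrableOn)
    (fun s hs hμs => ?_)
    (StronglyMeasurable.aestronglyMeasurable (L.continuous.comp_stronglyMeasurable stronglyMeasurable_condExp))
  rw [L.integral_comp_comm integrable_condExp.integrableOn,
    L.integral_comp_comm hg.integrableOn, setIntegral_condExp hm hg hs]

theorem aux_condexp_inner_const (hm : m ≤ m0) [SigmaFinite (P.trim hm)] (c : E) {g : Ω → E}
    (hg : Integrable g P) :
    P[fun ω => ⟪c, g ω⟫|m] =ᵐ[P] fun ω => ⟪c, (P[g|m]) ω⟫ :=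
  calc P[fun ω => ⟪c, g ω⟫|m] =ᵐ[P] P[fun ω => (innerSL ℝ c) (g ω)|m] := by
        refine condExp_congr_ae (Eventually.of_forall fun ω => ?_); simp
    _ =ᵐ[P] fun ω => (innerSL ℝ c) ((P[g|m]) ω) := (aux_condexp_clm_comm hm (innerSL ℝ c) hg).symm
    _ =ᵐ[P] fun ω => ⟪c, (P[g|m]) ω⟫ := Eventually.of_forall fun ω => by simp

theorem aux_integrable_inner_simpleFunc (hm : m ≤ m0) (f : @SimpleFunc Ω m E) {g : Ω → E}
    (hg : Integrable g P) : Integrable (fun ω => ⟪f ω, g ω⟫) P := by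
  obtain ⟨C, hC⟩ := @SimpleFunc.exists_forall_norm_le Ω E m _ f
  exact aux_integrable_inner_of_bound ((f.stronglyMeasurable.mono hm).aestronglyMeasurable) hg C
    (Eventually.of_forall hC)

theorem aux_condexp_inner_simpleFunc (hm : m ≤ m0) [SigmaFinite (P.trim hm)]
    (f : @SimpleFunc Ω m E) {g : Ω → E} (hg : Integrable g P) :
    P[fun ω => ⟪f ω, g ω⟫|m] =ᵐ[P] fun ω => ⟪f ω, (P[g|m]) ω⟫ := by
  apply @SimpleFunc.induction Ω E m _
    (fun f => P[fun ω => ⟪f ω, g ω⟫|m] =ᵐ[P] fun ω => ⟪f ω, (P[g|m]) ω⟫)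
    (fun c s hs => ?_) (fun f₁ f₂ _ h₁ h₂ => ?_) f
  · classical
    simp only [SimpleFunc.coe_piecewise, SimpleFunc.coe_const, SimpleFunc.coe_zero]
    have hci : Integrable (fun ω => ⟪c, g ω⟫) P := by
      simpa using (innerSL ℝ c).integrable_comp hg
    have heq : ∀ g' : Ω → E,
        (fun ω => ⟪s.piecewise (Function.const Ω c) (Function.const Ω 0) ω, g' ω⟫)
          = s.indicator fun ω => ⟪c, g' ω⟫ := by
      intro g'; funext ω; by_cases hω : ω ∈ s
      · simp [Set.piecewise_eq_of_mem _ _ _ hω, Set.indicator_of_mem hω]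
      · simp [Set.piecewise_eq_of_notMem _ _ _ hω, Set.indicator_of_notMem hω]
    rw [heq g, heq (P[g|m])]
    refine (condExp_indicator hci hs).trans ?_
    filter_upwards [aux_condexp_inner_const hm c hg] with ω hω
    by_cases hω' : ω ∈ s
    · rw [Set.indicator_of_mem hω', Set.indicator_of_mem hω', hω]
    · rw [Set.indicator_of_notMem hω', Set.indicator_of_notMem hω']
  · have hadd := @SimpleFunc.coe_add Ω E m _ f₁ f₂
    have e1 : (fun ω => ⟪(f₁ + f₂) ω, g ω⟫)
        = (fun ω => ⟪f₁ ω, g ω⟫) + fun ω => ⟪f₂ ω, g ω⟫ := by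
      funext ω; rw [hadd, Pi.add_apply, Pi.add_apply, inner_add_left]
    have e2 : (fun ω => ⟪(f₁ + f₂) ω, (P[g|m]) ω⟫)
        = (fun ω => ⟪f₁ ω, (P[g|m]) ω⟫) + fun ω => ⟪f₂ ω, (P[g|m]) ω⟫ := by
      funext ω; rw [hadd, Pi.add_apply, Pi.add_apply, inner_add_left]
    rw [e1, e2]
    refine (condExp_add (aux_integrable_inner_simpleFunc hm f₁ hg)
      (aux_integrable_inner_simpleFunc hm f₂ hg) m).trans ?_
    exact h₁.add h₂

theorem aux_condexp_inner_of_bound (hm : m ≤ m0) [IsFiniteMeasure P] {h g : Ω → E}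
    (hh : StronglyMeasurable[m] h) (hg : Integrable g P) (c : ℝ)
    (hbound : ∀ᵐ ω ∂P, ‖h ω‖ ≤ c) :
    P[fun ω => ⟪h ω, g ω⟫|m] =ᵐ[P] fun ω => ⟪h ω, (P[g|m]) ω⟫ := by
  let fs := hh.approxBounded c
  have hfs_tendsto : ∀ᵐ ω ∂P, Tendsto (fs · ω) atTop (𝓝 (h ω)) :=
    hh.tendsto_approxBounded_ae hbound
  by_cases hP : P = 0
  · unfold Filter.EventuallyEq
    rw [hP, ae_zero]
    exact Filter.eventually_bot
  have : (ae P).NeBot := ae_neBot.2 hP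
  have hc : 0 ≤ c := by
    rcases hbound.exists with ⟨_, hx⟩; exact (norm_nonneg _).trans hx
  have hfs_bound : ∀ n ω, ‖fs n ω‖ ≤ c := hh.norm_approxBounded_le hc
  have heq : P[fun ω => ⟪h ω, (P[g|m]) ω⟫|m] = fun ω => ⟪h ω, (P[g|m]) ω⟫ :=
    condExp_of_stronglyMeasurable hm (hh.inner stronglyMeasurable_condExp)
      (aux_integrable_inner_of_bound ((hh.mono hm).aestronglyMeasurable)
        integrable_condExp c hbound)
  rw [← heq]
  refine tendsto_condExp_unique (fun n ω => ⟪fs n ω, g ω⟫) (fun n ω => ⟪fs n ω, (P[g|m]) ω⟫)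
    _ _
    (fun n => aux_integrable_inner_of_bound
      (((fs n).stronglyMeasurable.mono hm).aestronglyMeasurable) hg c
      (Eventually.of_forall (hfs_bound n)))
    (fun n => aux_integrable_inner_of_bound
      (((fs n).stronglyMeasurable.mono hm).aestronglyMeasurable) integrable_condExp c
      (Eventually.of_forall (hfs_bound n)))
    ?_ ?_ (fun ω => c * ‖g ω‖) (hg.norm.const_mul c) (fun ω => c * ‖(P[g|m]) ω‖)
    (integrable_condExp.norm.const_mul c) ?_ ?_ ?_
  · filter_upwards [hfs_tendsto] with ω hω
    exact hω.inner tendsto_const_nhds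
  · filter_upwards [hfs_tendsto] with ω hω
    exact hω.inner tendsto_const_nhds
  · refine fun n => Eventually.of_forall fun ω => ?_
    rw [Real.norm_eq_abs]
    exact (abs_real_inner_le_norm _ _).trans
      (mul_le_mul_of_nonneg_right (hfs_bound n ω) (norm_nonneg _))
  · refine fun n => Eventually.of_forall fun ω => ?_
    rw [Real.norm_eq_abs]
    exact (abs_real_inner_le_norm _ _).trans
      (mul_le_mul_of_nonneg_right (hfs_bound n ω) (norm_nonneg _))
  · intro n
    refine (aux_condexp_inner_simpleFunc hm (fs n) hg).trans ?_
    rw [condExp_of_stronglyMeasurable hm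
      ((fs n).stronglyMeasurable.inner stronglyMeasurable_condExp)
      (aux_integrable_inner_of_bound
        (((fs n).stronglyMeasurable.mono hm).aestronglyMeasurable) integrable_condExp c
        (Eventually.of_forall (hfs_bound n)))]

theorem aux_condexp_inner_stronglyMeasurable (hm : m ≤ m0) [SigmaFinite (P.trim hm)] {h g : Ω → E}
    (hh : StronglyMeasurable[m] h) (hhg : Integrable (fun ω => ⟪h ω, g ω⟫) P)
    (hg : Integrable g P) :
    P[fun ω => ⟪h ω, g ω⟫|m] =ᵐ[P] fun ω => ⟪h ω, (P[g|m]) ω⟫ := by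
  obtain ⟨sets, sets_prop, h_univ⟩ := hh.exists_spanning_measurableSet_norm_le hm P
  simp only [forall_and] at sets_prop
  obtain ⟨h_meas, h_finite, h_norm⟩ := sets_prop
  suffices h_ae : ∀ n, ∀ᵐ ω ∂P, ω ∈ sets n →
      (P[fun ω => ⟪h ω, g ω⟫|m]) ω = ⟪h ω, (P[g|m]) ω⟫ by
    rw [← ae_all_iff] at h_ae
    filter_upwards [h_ae] with ω hω
    obtain ⟨i, hi⟩ : ∃ i, ω ∈ sets i := by
      have h_mem : ω ∈ ⋃ i, sets i := by rw [h_univ]; exact Set.mem_univ _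
      simpa using h_mem
    exact hω i hi
  refine fun n => ae_imp_of_ae_restrict ?_
  suffices (P.restrict (sets n))[fun ω => ⟪h ω, g ω⟫|m] =ᵐ[P.restrict (sets n)]
      fun ω => ⟪h ω, ((P.restrict (sets n))[g|m]) ω⟫ by
    refine (condExp_restrict_ae_eq_restrict hm (h_meas n) hhg).symm.trans (this.trans ?_)
    filter_upwards [condExp_restrict_ae_eq_restrict hm (h_meas n) hg] with ω hω
    rw [hω]
  suffices (P.restrict (sets n))[fun ω => ⟪Set.indicator (sets n) h ω, g ω⟫|m]
      =ᵐ[P.restrict (sets n)]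
      fun ω => ⟪Set.indicator (sets n) h ω, ((P.restrict (sets n))[g|m]) ω⟫ by
    refine EventuallyEq.trans ?_ (this.trans ?_)
    · refine condExp_congr_ae ?_
      filter_upwards [indicator_ae_eq_restrict (hm _ (h_meas n))
        (f := h)] with ω hω
      rw [hω]
    · filter_upwards [indicator_ae_eq_restrict (hm _ (h_meas n)) (f := h)] with ω hω
      rw [hω]
  have : IsFiniteMeasure (P.restrict (sets n)) := by
    constructor
    rw [Measure.restrict_apply_univ]
    exact h_finite n
  refine aux_condexp_inner_of_bound hm (hh.indicator (h_meas n)) hg.integrableOn n ?_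
  filter_upwards with ω
  by_cases hωs : ω ∈ sets n
  · simpa only [hωs, Set.indicator_of_mem] using h_norm n ω hωs
  · simp only [hωs, Set.indicator_of_notMem, not_false_iff, norm_zero, Nat.cast_nonneg]

theorem aux_integrable_integral_inner_condexp (hm : m ≤ m0) [IsProbabilityMeasure P] {h g : Ω → E}
    (hh : StronglyMeasurable[m] h) (hg : Integrable g P)
    (hhg : Integrable (fun ω => ⟪h ω, g ω⟫) P) :
    Integrable (fun ω => ⟪h ω, (P[g|m]) ω⟫) P ∧
      ∫ ω, ⟪h ω, (P[g|m]) ω⟫ ∂P = ∫ ω, ⟪h ω, g ω⟫ ∂P := by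
  have hcond := aux_condexp_inner_stronglyMeasurable hm hh hhg hg
  refine ⟨integrable_condExp.congr hcond, ?_⟩
  rw [← integral_congr_ae hcond, integral_condExp hm]

end Aux

/-- Theorem 1, in-expectation version: if almost surely the conditional
expectation `G_t = E[g_t | ℱ_t]` is a subgradient of `ℒ` at `x_t`, then
`E[α_{1:T}(ℒ(x_T) − ℒ(x⋆))] ≤ E[Σ_{t=1}^T α_t ⟨g_t, w_t − x⋆⟩]`. -/
theorem anytime_online_to_batch_in_expectation
    {E : Type*} [NormedAddCommGroup E] [InnerProductSpace ℝ E] [CompleteSpace E]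
    [SecondCountableTopology E] [MeasurableSpace E] [BorelSpace E]
    {Ω : Type*} [m0 : MeasurableSpace Ω] (P : Measure Ω) [IsProbabilityMeasure P]
    (ℱ : ℕ → MeasurableSpace Ω) (hℱmono : Monotone ℱ) (hℱle : ∀ t, ℱ t ≤ m0)
    (D : Set E) (hD : Convex ℝ D)
    (T : ℕ) (hT : 1 ≤ T)
    (α : ℕ → ℝ) (hα : ∀ t, 1 ≤ t → t ≤ T → 0 ≤ α t) (hα1 : 0 < α 1)
    (w g : ℕ → Ω → E)
    (hwD : ∀ t, 1 ≤ t → t ≤ T → ∀ ω, w t ω ∈ D)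
    (hwmeas : ∀ s t, 1 ≤ s → s ≤ t → t ≤ T → StronglyMeasurable[ℱ t] (w s))
    (hgmeas : ∀ s t, 1 ≤ s → s < t → t ≤ T → StronglyMeasurable[ℱ t] (g s))
    (hgint : ∀ t, 1 ≤ t → t ≤ T → Integrable (g t) P)
    (x : ℕ → Ω → E)
    (hx : ∀ t, 1 ≤ t → t ≤ T → ∀ ω,
      x t ω = (∑ i ∈ Finset.Icc 1 t, α i)⁻¹ • ∑ i ∈ Finset.Icc 1 t, α i • w i ω)
    (f : E → ℝ) (hconv : ConvexOn ℝ Set.univ f)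
    (hsubgrad : ∀ t, 1 ≤ t → t ≤ T → ∀ᵐ ω ∂P, ∀ y : E,
      f y ≥ f (x t ω) + ⟪(P[g t | ℱ t]) ω, y - x t ω⟫)
    (hfint : ∀ t, 1 ≤ t → t ≤ T → Integrable (fun ω => f (x t ω)) P)
    (hinner_w : ∀ t, 1 ≤ t → t ≤ T → Integrable (fun ω => ⟪g t ω, w t ω⟫) P)
    (hinner_x : ∀ s t, 1 ≤ s → s ≤ T → 1 ≤ t → t ≤ T →
      Integrable (fun ω => ⟪g t ω, x s ω⟫) P)
    (xstar : E) (hxstar : xstar ∈ D) :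
    ∫ ω, (∑ t ∈ Finset.Icc 1 T, α t) * (f (x T ω) - f xstar) ∂P
      ≤ ∫ ω, ∑ t ∈ Finset.Icc 1 T, α t * ⟪g t ω, w t ω - xstar⟫ ∂P := by
  -- positivity of the weight sums
  have hAnn : ∀ t, t ≤ T → 0 ≤ ∑ i ∈ Finset.Icc 1 t, α i := by
    intro t htT
    refine Finset.sum_nonneg fun i hi => ?_
    rw [Finset.mem_Icc] at hi
    exact hα i hi.1 (hi.2.trans htT)
  have hApos : ∀ t, 1 ≤ t → t ≤ T → 0 < ∑ i ∈ Finset.Icc 1 t, α i := by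
    intro t h1 h2
    calc (0:ℝ) < α 1 := hα1
      _ ≤ ∑ i ∈ Finset.Icc 1 t, α i := by
          refine Finset.single_le_sum (f := α) (fun i hi => ?_) (Finset.mem_Icc.2 ⟨le_rfl, h1⟩)
          rw [Finset.mem_Icc] at hi
          exact hα i hi.1 (hi.2.trans h2)
  have hxsum : ∀ t, 1 ≤ t → t ≤ T → ∀ ω,
      (∑ i ∈ Finset.Icc 1 t, α i) • x t ω = ∑ i ∈ Finset.Icc 1 t, α i • w i ω := by
    intro t h1 h2 ω
    rw [hx t h1 h2 ω, smul_inv_smul₀ (hApos t h1 h2).ne']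
  -- collecting the a.s. subgradient hypothesis
  have hae : ∀ᵐ ω ∂P, ∀ t, 1 ≤ t → t ≤ T → ∀ y : E,
      f y ≥ f (x t ω) + ⟪(P[g t | ℱ t]) ω, y - x t ω⟫ := by
    rw [ae_all_iff]
    intro t
    by_cases hc : 1 ≤ t ∧ t ≤ T
    · filter_upwards [hsubgrad t hc.1 hc.2] with ω hω _ _ y
      exact hω y
    · exact Eventually.of_forall fun ω h1 h2 => absurd ⟨h1, h2⟩ hc
  -- the pointwise (a.e.) key inequality, by induction
  have key : ∀ᵐ ω ∂P, (∑ t ∈ Finset.Icc 1 T, α t) * (f (x T ω) - f xstar)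
      ≤ ∑ t ∈ Finset.Icc 1 T, α t * ⟪(P[g t | ℱ t]) ω, w t ω - xstar⟫ := by
    filter_upwards [hae] with ω hω
    suffices H : ∀ t, 1 ≤ t → t ≤ T →
        (∑ i ∈ Finset.Icc 1 t, α i) * (f (x t ω) - f xstar)
          ≤ ∑ s ∈ Finset.Icc 1 t, α s * ⟪(P[g s | ℱ s]) ω, w s ω - xstar⟫ from H T hT le_rfl
    intro t ht1
    induction t, ht1 using Nat.le_induction with
    | base =>
      intro h1T
      simp only [Finset.Icc_self, Finset.sum_singleton]
      have hx1 : x 1 ω = w 1 ω := by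
        rw [hx 1 le_rfl h1T ω]
        simp only [Finset.Icc_self, Finset.sum_singleton]
        rw [inv_smul_smul₀ hα1.ne']
      rw [← hx1]
      have hsg := (hω 1 le_rfl h1T xstar).le
      have hflip : ⟪(P[g 1 | ℱ 1]) ω, xstar - x 1 ω⟫
          = -⟪(P[g 1 | ℱ 1]) ω, x 1 ω - xstar⟫ := by
        rw [← inner_neg_right, neg_sub]
      have hle : f (x 1 ω) - f xstar ≤ ⟪(P[g 1 | ℱ 1]) ω, x 1 ω - xstar⟫ := by
        rw [hflip] at hsg; linarith
      exact mul_le_mul_of_nonneg_left hle (hα 1 le_rfl h1T)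
    | succ n hn ih =>
      intro hnT
      have hn'T : n ≤ T := Nat.le_of_succ_le hnT
      have h1n1 : (1:ℕ) ≤ n + 1 := by omega
      have ihn := ih hn'T
      have hsub := hω (n+1) h1n1 hnT
      -- the averaging identity
      have hvec' : ((∑ i ∈ Finset.Icc 1 n, α i) + α (n+1)) • x (n+1) ω
          = (∑ i ∈ Finset.Icc 1 n, α i) • x n ω + α (n+1) • w (n+1) ω := by
        rw [← Finset.sum_Icc_succ_top h1n1 α, hxsum (n+1) h1n1 hnT ω,
          Finset.sum_Icc_succ_top h1n1 (fun i => α i • w i ω), ← hxsum n hn hn'T ω]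
      rw [Finset.sum_Icc_succ_top h1n1 α, Finset.sum_Icc_succ_top h1n1
        (fun s => α s * ⟪(P[g s | ℱ s]) ω, w s ω - xstar⟫)]
      have hann : 0 ≤ ∑ i ∈ Finset.Icc 1 n, α i := hAnn n hn'T
      have hbnn : 0 ≤ α (n+1) := hα (n+1) h1n1 hnT
      have hkey : (∑ i ∈ Finset.Icc 1 n, α i) * ⟪(P[g (n+1) | ℱ (n+1)]) ω, x n ω - x (n+1) ω⟫
          + α (n+1) * ⟪(P[g (n+1) | ℱ (n+1)]) ω, xstar - x (n+1) ω⟫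
          = -(α (n+1) * ⟪(P[g (n+1) | ℱ (n+1)]) ω, w (n+1) ω - xstar⟫) := by
        rw [← real_inner_smul_right, ← real_inner_smul_right, ← inner_add_right,
          ← real_inner_smul_right, ← inner_neg_right]
        congr 1
        calc (∑ i ∈ Finset.Icc 1 n, α i) • (x n ω - x (n+1) ω)
              + α (n+1) • (xstar - x (n+1) ω)
            = ((∑ i ∈ Finset.Icc 1 n, α i) • x n ω + α (n+1) • w (n+1) ω)
                - ((∑ i ∈ Finset.Icc 1 n, α i) + α (n+1)) • x (n+1) ω
                - α (n+1) • (w (n+1) ω - xstar) := by module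
          _ = ((∑ i ∈ Finset.Icc 1 n, α i) + α (n+1)) • x (n+1) ω
                - ((∑ i ∈ Finset.Icc 1 n, α i) + α (n+1)) • x (n+1) ω
                - α (n+1) • (w (n+1) ω - xstar) := by rw [← hvec']
          _ = -(α (n+1) • (w (n+1) ω - xstar)) := by module
      nlinarith [mul_le_mul_of_nonneg_left (hsub (x n ω)).le hann,
        mul_le_mul_of_nonneg_left (hsub xstar).le hbnn, hkey, ihn]
  -- integrability of the inner-product terms
  have hint_h : ∀ t, 1 ≤ t → t ≤ T →
      Integrable (fun ω => ⟪w t ω - xstar, g t ω⟫) P := by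
    intro t h1 h2
    have hflip : (fun ω => ⟪w t ω - xstar, g t ω⟫)
        = fun ω => ⟪g t ω, w t ω⟫ - ⟪g t ω, xstar⟫ := by
      funext ω; rw [real_inner_comm, inner_sub_right]
    rw [hflip]
    refine (hinner_w t h1 h2).sub ?_
    have h3 := (innerSL ℝ xstar).integrable_comp (hgint t h1 h2)
    have h4 : (fun ω => (innerSL ℝ xstar) (g t ω)) = fun ω => ⟪g t ω, xstar⟫ := by
      funext ω; simp [real_inner_comm]
    exact h4 ▸ h3
  have hmain : ∀ t, 1 ≤ t → t ≤ T →
      Integrable (fun ω => ⟪(P[g t | ℱ t]) ω, w t ω - xstar⟫) P ∧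
        ∫ ω, ⟪(P[g t | ℱ t]) ω, w t ω - xstar⟫ ∂P = ∫ ω, ⟪g t ω, w t ω - xstar⟫ ∂P := by
    intro t h1 h2
    have hhm : StronglyMeasurable[ℱ t] (fun ω => w t ω - xstar) :=
      (hwmeas t t h1 le_rfl h2).sub stronglyMeasurable_const
    obtain ⟨hint, heq⟩ := aux_integrable_integral_inner_condexp (hℱle t) hhm
      (hgint t h1 h2) (hint_h t h1 h2)
    constructor
    · exact hint.congr (Eventually.of_forall fun ω => real_inner_comm _ _)
    · calc ∫ ω, ⟪(P[g t | ℱ t]) ω, w t ω - xstar⟫ ∂P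
          = ∫ ω, ⟪w t ω - xstar, (P[g t | ℱ t]) ω⟫ ∂P :=
            integral_congr_ae (Eventually.of_forall fun ω => real_inner_comm _ _)
        _ = ∫ ω, ⟪w t ω - xstar, g t ω⟫ ∂P := heq
        _ = ∫ ω, ⟪g t ω, w t ω - xstar⟫ ∂P :=
            integral_congr_ae (Eventually.of_forall fun ω => real_inner_comm _ _)
  have hGint : Integrable
      (fun ω => ∑ t ∈ Finset.Icc 1 T, α t * ⟪(P[g t | ℱ t]) ω, w t ω - xstar⟫) P := by
    refine integrable_finset_sum _ fun t ht => ?_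
    rw [Finset.mem_Icc] at ht
    exact ((hmain t ht.1 ht.2).1.const_mul _)
  have hLint : Integrable (fun ω => (∑ t ∈ Finset.Icc 1 T, α t) * (f (x T ω) - f xstar)) P :=
    ((hfint T hT le_rfl).sub (integrable_const _)).const_mul _
  have hgwint : ∀ t ∈ Finset.Icc 1 T,
      Integrable (fun ω => α t * ⟪g t ω, w t ω - xstar⟫) P := by
    intro t ht
    rw [Finset.mem_Icc] at ht
    exact ((hint_h t ht.1 ht.2).congr
      (Eventually.of_forall fun ω => real_inner_comm _ _)).const_mul _
  calc ∫ ω, (∑ t ∈ Finset.Icc 1 T, α t) * (f (x T ω) - f xstar) ∂P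
      ≤ ∫ ω, ∑ t ∈ Finset.Icc 1 T, α t * ⟪(P[g t | ℱ t]) ω, w t ω - xstar⟫ ∂P :=
        integral_mono_ae hLint hGint key
    _ = ∑ t ∈ Finset.Icc 1 T, ∫ ω, α t * ⟪(P[g t | ℱ t]) ω, w t ω - xstar⟫ ∂P := by
        refine integral_finset_sum _ fun t ht => ?_
        rw [Finset.mem_Icc] at ht
        exact ((hmain t ht.1 ht.2).1.const_mul _)
    _ = ∑ t ∈ Finset.Icc 1 T, ∫ ω, α t * ⟪g t ω, w t ω - xstar⟫ ∂P := by
        refine Finset.sum_congr rfl fun t ht => ?_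
        rw [Finset.mem_Icc] at ht
        rw [integral_const_mul, integral_const_mul, (hmain t ht.1 ht.2).2]
    _ = ∫ ω, ∑ t ∈ Finset.Icc 1 T, α t * ⟪g t ω, w t ω - xstar⟫ ∂P :=
        (integral_finset_sum _ hgwint).symm
end

section
/- (Corollary 3, deterministic version.) Suppose ℒ : E → ℝ is convex, g_t ∈ ∂ℒ(x_t) for each 1 ≤ t ≤ T, and x⋆ ∈ D. If R^M ≥ 0 is a number such that Σ_{i=1}^t α_i ⟨g_i, w_i − x⋆⟩ ≤ R^M for every 1 ≤ t ≤ T, then Σ_{t=1}^T α_t (ℒ(x_t) − ℒ(x⋆)) ≤ R^M (1 + log(α_{1:T}/α_1)). -/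
open scoped RealInnerProductSpace

/-- Corollary 3, deterministic version: if the partial weighted linearized
regrets are all bounded by `R^M ≥ 0`, then
`Σ_{t=1}^T α_t (ℒ(x_t) − ℒ(x⋆)) ≤ R^M (1 + log(α_{1:T}/α_1))`. -/
theorem anytime_regret_bound_deterministic
    {E : Type*} [NormedAddCommGroup E] [InnerProductSpace ℝ E]
    (D : Set E) (hD : Convex ℝ D)
    (T : ℕ) (hT : 1 ≤ T)
    (α : ℕ → ℝ) (hα : ∀ t, 1 ≤ t → t ≤ T → 0 ≤ α t) (hα1 : 0 < α 1)
    (w : ℕ → E) (hw : ∀ t, 1 ≤ t → t ≤ T → w t ∈ D)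
    (x : ℕ → E)
    (hx : ∀ t, 1 ≤ t → t ≤ T →
      x t = (∑ i ∈ Finset.Icc 1 t, α i)⁻¹ • ∑ i ∈ Finset.Icc 1 t, α i • w i)
    (f : E → ℝ) (hconv : ConvexOn ℝ Set.univ f)
    (g : ℕ → E)
    (hg : ∀ t, 1 ≤ t → t ≤ T → ∀ y : E, f y ≥ f (x t) + ⟪g t, y - x t⟫)
    (xstar : E) (hxstar : xstar ∈ D)
    (RM : ℝ) (hRM : 0 ≤ RM)
    (hreg : ∀ t, 1 ≤ t → t ≤ T →
      ∑ i ∈ Finset.Icc 1 t, α i * ⟪g i, w i - xstar⟫ ≤ RM) :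
    ∑ t ∈ Finset.Icc 1 T, α t * (f (x t) - f xstar)
      ≤ RM * (1 + Real.log ((∑ i ∈ Finset.Icc 1 T, α i) / α 1)) := by
  -- abbreviation for the partial sums of weights
  have hAnn : ∀ t, t ≤ T → 0 ≤ ∑ i ∈ Finset.Icc 1 t, α i := by
    intro t ht
    exact Finset.sum_nonneg fun i hi =>
      hα i (Finset.mem_Icc.mp hi).1 (le_trans (Finset.mem_Icc.mp hi).2 ht)
  have hApos : ∀ t, 1 ≤ t → t ≤ T → 0 < ∑ i ∈ Finset.Icc 1 t, α i := by
    intro t h1 h2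
    have h1' : (1:ℕ) ∈ Finset.Icc 1 t := Finset.mem_Icc.mpr ⟨le_refl 1, h1⟩
    calc 0 < α 1 := hα1
      _ ≤ ∑ i ∈ Finset.Icc 1 t, α i :=
        Finset.single_le_sum (fun i hi =>
          hα i (Finset.mem_Icc.mp hi).1 (le_trans (Finset.mem_Icc.mp hi).2 h2)) h1'
  have hAsucc : ∀ t : ℕ, ∑ i ∈ Finset.Icc 1 (t+1), α i = (∑ i ∈ Finset.Icc 1 t, α i) + α (t+1) :=
    fun t => Finset.sum_Icc_succ_top ((by omega : 1 ≤ t+1)) α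
  -- A t • x t = ∑ α i • w i
  have hxs : ∀ t, 1 ≤ t → t ≤ T →
      (∑ i ∈ Finset.Icc 1 t, α i) • x t = ∑ i ∈ Finset.Icc 1 t, α i • w i := by
    intro t h1 h2
    rw [hx t h1 h2, smul_inv_smul₀ (ne_of_gt (hApos t h1 h2))]
  -- key induction: A t * (f (x t) - f x⋆) ≤ partial linearized regret
  have key : ∀ t, 1 ≤ t → t ≤ T →
      (∑ i ∈ Finset.Icc 1 t, α i) * (f (x t) - f xstar)
        ≤ ∑ i ∈ Finset.Icc 1 t, α i * ⟪g i, w i - xstar⟫ := by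
    intro t h1
    induction t, h1 using Nat.le_induction with
    | base =>
      intro h2
      have hx1 : x 1 = w 1 := by
        rw [hx 1 le_rfl h2]
        simp [inv_smul_smul₀ (ne_of_gt hα1)]
      have c1 := hg 1 le_rfl h2 xstar
      rw [hx1, inner_sub_right] at c1
      simp only [Finset.Icc_self, Finset.sum_singleton, hx1, inner_sub_right]
      nlinarith [mul_le_mul_of_nonneg_left (by linarith :
        f (w 1) - f xstar ≤ ⟪g 1, w 1⟫ - ⟪g 1, xstar⟫) (le_of_lt hα1)]
    | succ t ht ih =>
      intro h2
      have htT : t ≤ T := le_trans (Nat.le_succ t) h2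
      have IH := ih htT
      have hA0 : 0 ≤ ∑ i ∈ Finset.Icc 1 t, α i := hAnn t htT
      have hαt : 0 ≤ α (t+1) := hα (t+1) ((by omega : 1 ≤ t+1)) h2
      -- vector identity
      have hwv : α (t+1) • w (t+1)
          = (∑ i ∈ Finset.Icc 1 (t+1), α i) • x (t+1)
            - (∑ i ∈ Finset.Icc 1 t, α i) • x t := by
        have esum : ∑ i ∈ Finset.Icc 1 (t+1), α i • w i
            = (∑ i ∈ Finset.Icc 1 t, α i • w i) + α (t+1) • w (t+1) :=
          Finset.sum_Icc_succ_top (by omega : 1 ≤ t+1) _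
        have e1 := hxs (t+1) ((by omega : 1 ≤ t+1)) h2
        rw [esum, ← hxs t ht htT] at e1
        rw [e1]; abel
      have hinner : α (t+1) * ⟪g (t+1), w (t+1)⟫
          = (∑ i ∈ Finset.Icc 1 (t+1), α i) * ⟪g (t+1), x (t+1)⟫
            - (∑ i ∈ Finset.Icc 1 t, α i) * ⟪g (t+1), x t⟫ := by
        rw [← real_inner_smul_right, hwv, inner_sub_right,
          real_inner_smul_right, real_inner_smul_right]
      have c1 := hg (t+1) ((by omega : 1 ≤ t+1)) h2 xstar
      have c2 := hg (t+1) ((by omega : 1 ≤ t+1)) h2 (x t)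
      rw [inner_sub_right] at c1 c2
      have p1 : α (t+1) * (f (x (t+1)) - f xstar)
          ≤ α (t+1) * (⟪g (t+1), x (t+1)⟫ - ⟪g (t+1), xstar⟫) :=
        mul_le_mul_of_nonneg_left (by linarith) hαt
      have p2 : (∑ i ∈ Finset.Icc 1 t, α i) * (f (x (t+1)) - f (x t))
          ≤ (∑ i ∈ Finset.Icc 1 t, α i) * (⟪g (t+1), x (t+1)⟫ - ⟪g (t+1), x t⟫) :=
        mul_le_mul_of_nonneg_left (by linarith) hA0
      rw [Finset.sum_Icc_succ_top ((by omega : 1 ≤ t+1)) α,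
        Finset.sum_Icc_succ_top ((by omega : 1 ≤ t+1))
          (fun i => α i * ⟪g i, w i - xstar⟫)]
      have hAs := hAsucc t
      rw [inner_sub_right]
      rw [hAs] at hinner
      linarith [IH, p1, p2, hinner]
  -- pointwise bound f (x t) - f x⋆ ≤ RM / A t
  have hΔ : ∀ t, 1 ≤ t → t ≤ T → f (x t) - f xstar ≤ RM / ∑ i ∈ Finset.Icc 1 t, α i := by
    intro t h1 h2
    rw [le_div_iff₀ (hApos t h1 h2)]
    calc (f (x t) - f xstar) * ∑ i ∈ Finset.Icc 1 t, α i
        = (∑ i ∈ Finset.Icc 1 t, α i) * (f (x t) - f xstar) := by ring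
      _ ≤ ∑ i ∈ Finset.Icc 1 t, α i * ⟪g i, w i - xstar⟫ := key t h1 h2
      _ ≤ RM := hreg t h1 h2
  -- logarithmic bound on the harmonic-type sum
  have hlog : ∀ t, 1 ≤ t → t ≤ T →
      ∑ i ∈ Finset.Icc 1 t, α i / (∑ j ∈ Finset.Icc 1 i, α j)
        ≤ 1 + Real.log ((∑ i ∈ Finset.Icc 1 t, α i) / α 1) := by
    intro t h1
    induction t, h1 using Nat.le_induction with
    | base =>
      intro h2
      simp [div_self (ne_of_gt hα1)]
    | succ t ht ih =>
      intro h2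
      have htT : t ≤ T := le_trans (Nat.le_succ t) h2
      have hA0 : 0 < ∑ i ∈ Finset.Icc 1 t, α i := hApos t ht htT
      have hA1 : 0 < ∑ i ∈ Finset.Icc 1 (t+1), α i :=
        hApos (t+1) ((by omega : 1 ≤ t+1)) h2
      have hAs := hAsucc t
      have hstep : α (t+1) / (∑ i ∈ Finset.Icc 1 (t+1), α i)
          ≤ Real.log (∑ i ∈ Finset.Icc 1 (t+1), α i) - Real.log (∑ i ∈ Finset.Icc 1 t, α i) := by
        have hlx := Real.log_le_sub_one_of_pos
          (div_pos hA0 hA1 : 0 < (∑ i ∈ Finset.Icc 1 t, α i) / ∑ i ∈ Finset.Icc 1 (t+1), α i)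
        rw [Real.log_div (ne_of_gt hA0) (ne_of_gt hA1)] at hlx
        have he : (∑ i ∈ Finset.Icc 1 t, α i) / (∑ i ∈ Finset.Icc 1 (t+1), α i) - 1
            = -(α (t+1) / (∑ i ∈ Finset.Icc 1 (t+1), α i)) := by
          field_simp
          linarith
        rw [he] at hlx
        linarith
      rw [Finset.sum_Icc_succ_top ((by omega : 1 ≤ t+1))
        (fun i => α i / (∑ j ∈ Finset.Icc 1 i, α j))]
      have hld1 : Real.log ((∑ i ∈ Finset.Icc 1 t, α i) / α 1)
          = Real.log (∑ i ∈ Finset.Icc 1 t, α i) - Real.log (α 1) :=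
        Real.log_div (ne_of_gt hA0) (ne_of_gt hα1)
      have hld2 : Real.log ((∑ i ∈ Finset.Icc 1 (t+1), α i) / α 1)
          = Real.log (∑ i ∈ Finset.Icc 1 (t+1), α i) - Real.log (α 1) :=
        Real.log_div (ne_of_gt hA1) (ne_of_gt hα1)
      have := ih htT
      rw [hld1] at this
      rw [hld2]
      linarith
  -- combine
  calc ∑ t ∈ Finset.Icc 1 T, α t * (f (x t) - f xstar)
      ≤ ∑ t ∈ Finset.Icc 1 T, RM * (α t / ∑ i ∈ Finset.Icc 1 t, α i) := by
        refine Finset.sum_le_sum fun t htm => ?_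
        obtain ⟨h1, h2⟩ := Finset.mem_Icc.mp htm
        have := mul_le_mul_of_nonneg_left (hΔ t h1 h2) (hα t h1 h2)
        calc α t * (f (x t) - f xstar) ≤ α t * (RM / ∑ i ∈ Finset.Icc 1 t, α i) := this
          _ = RM * (α t / ∑ i ∈ Finset.Icc 1 t, α i) := by ring
    _ = RM * ∑ t ∈ Finset.Icc 1 T, α t / ∑ i ∈ Finset.Icc 1 t, α i := by
        rw [Finset.mul_sum]
    _ ≤ RM * (1 + Real.log ((∑ i ∈ Finset.Icc 1 T, α i) / α 1)) :=
        mul_le_mul_of_nonneg_left (hlog T hT le_rfl) hRM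
end

section
/- (Corollary 4, deterministic version with explicit constant.) Take α_t = 1 for all t, so x_t = (1/t) Σ_{i=1}^t w_i. Suppose ℒ : E → ℝ is convex, g_t ∈ ∂ℒ(x_t) for each 1 ≤ t ≤ T, x⋆ ∈ D, and R_1 ≤ R_2 ≤ … ≤ R_T is a nondecreasing sequence with R_T ≥ 0 such that Σ_{i=1}^t ⟨g_i, w_i − x⋆⟩ ≤ R_t for every 1 ≤ t ≤ T. Then for every integer k ≥ 1, with s_t = t^k: (Σ_{t=1}^T s_t (ℒ(x_t) − ℒ(x⋆))) / (Σ_{t=1}^T s_t) ≤ (k+1) · R_T / T. -/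
open scoped RealInnerProductSpace

lemma sum_pow_lower_aux (T k : ℕ) :
    (T : ℝ) ^ (k + 1) ≤ ((k : ℝ) + 1) * ∑ t ∈ Finset.Icc 1 T, (t : ℝ) ^ k := by
  induction T with
  | zero => simp
  | succ n ih =>
    rw [Finset.sum_Icc_succ_top (Nat.le_add_left 1 n)]
    have hkey : ((n : ℝ) + 1) ^ (k + 1) - (n : ℝ) ^ (k + 1)
        ≤ ((k : ℝ) + 1) * ((n : ℝ) + 1) ^ k := by
      have h := geom_sum₂_mul ((n : ℝ) + 1) (n : ℝ) (k + 1)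
      have h2 : ((n : ℝ) + 1) - (n : ℝ) = 1 := by ring
      rw [h2, mul_one] at h
      rw [← h]
      have hb : ∀ i ∈ Finset.range (k + 1),
          ((n : ℝ) + 1) ^ i * (n : ℝ) ^ (k + 1 - 1 - i) ≤ ((n : ℝ) + 1) ^ k := by
        intro i hi
        simp only [Finset.mem_range] at hi
        have hik : i ≤ k := Nat.lt_succ_iff.mp hi
        calc ((n : ℝ) + 1) ^ i * (n : ℝ) ^ (k + 1 - 1 - i)
            ≤ ((n : ℝ) + 1) ^ i * ((n : ℝ) + 1) ^ (k + 1 - 1 - i) := by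
              apply mul_le_mul_of_nonneg_left _ (by positivity)
              exact pow_le_pow_left₀ (by positivity) (by linarith) _
          _ = ((n : ℝ) + 1) ^ k := by
              rw [← pow_add]
              congr 1
              omega
      calc ∑ i ∈ Finset.range (k + 1), ((n : ℝ) + 1) ^ i * (n : ℝ) ^ (k + 1 - 1 - i)
          ≤ ∑ i ∈ Finset.range (k + 1), ((n : ℝ) + 1) ^ k := Finset.sum_le_sum hb
        _ = ((k : ℝ) + 1) * ((n : ℝ) + 1) ^ k := by
            rw [Finset.sum_const, Finset.card_range]; push_cast; ring
    push_cast
    nlinarith [ih]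

/-- Corollary 4, deterministic version with explicit constant: with unit
weights, for every `k ≥ 1` and `s_t = t^k`,
`(Σ_{t=1}^T s_t (ℒ(x_t) − ℒ(x⋆))) / (Σ_{t=1}^T s_t) ≤ (k+1)·R_T/T`. -/
theorem anytime_simultaneous_weighted_regret
    {E : Type*} [NormedAddCommGroup E] [InnerProductSpace ℝ E]
    (D : Set E) (hD : Convex ℝ D)
    (T : ℕ) (hT : 1 ≤ T)
    (w : ℕ → E) (hw : ∀ t, 1 ≤ t → t ≤ T → w t ∈ D)
    (x : ℕ → E)
    (hx : ∀ t, 1 ≤ t → t ≤ T → x t = (t : ℝ)⁻¹ • ∑ i ∈ Finset.Icc 1 t, w i)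
    (f : E → ℝ) (hconv : ConvexOn ℝ Set.univ f)
    (g : ℕ → E)
    (hg : ∀ t, 1 ≤ t → t ≤ T → ∀ y : E, f y ≥ f (x t) + ⟪g t, y - x t⟫)
    (xstar : E) (hxstar : xstar ∈ D)
    (R : ℕ → ℝ)
    (hRmono : ∀ s t, 1 ≤ s → s ≤ t → t ≤ T → R s ≤ R t) (hRT : 0 ≤ R T)
    (hreg : ∀ t, 1 ≤ t → t ≤ T →
      ∑ i ∈ Finset.Icc 1 t, ⟪g i, w i - xstar⟫ ≤ R t) :
    ∀ k : ℕ, 1 ≤ k →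
      (∑ t ∈ Finset.Icc 1 T, (t : ℝ) ^ k * (f (x t) - f xstar))
          / (∑ t ∈ Finset.Icc 1 T, (t : ℝ) ^ k)
        ≤ (k + 1) * R T / T := by
  -- Key telescoping bound: t * (f (x t) - f xstar) ≤ regret up to t
  have key : ∀ t, 1 ≤ t → t ≤ T →
      (t : ℝ) * (f (x t) - f xstar) ≤ ∑ i ∈ Finset.Icc 1 t, ⟪g i, w i - xstar⟫ := by
    intro t ht1
    induction t, ht1 using Nat.le_induction with
    | base =>
      intro h1T
      have hx1 : x 1 = w 1 := by
        rw [hx 1 le_rfl h1T]; simp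
      have h := hg 1 le_rfl h1T xstar
      rw [hx1] at h
      have hsub : xstar - w 1 = -(w 1 - xstar) := by abel
      rw [hsub, inner_neg_right] at h
      simp only [Finset.Icc_self, Finset.sum_singleton]
      rw [hx1]
      push_cast
      linarith
    | succ n hn ih =>
      intro hsT
      have hnT : n ≤ T := Nat.le_of_succ_le hsT
      have ih' := ih hnT
      have hn0 : (n : ℝ) ≠ 0 := by positivity
      have hn10 : ((n : ℝ) + 1) ≠ 0 := by positivity
      -- w (n+1) = (n+1) • x (n+1) - n • x n
      have hsum : ∑ i ∈ Finset.Icc 1 (n + 1), w i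
          = (∑ i ∈ Finset.Icc 1 n, w i) + w (n + 1) :=
        Finset.sum_Icc_succ_top (Nat.le_add_left 1 n) w
      have hxn : (n : ℝ) • x n = ∑ i ∈ Finset.Icc 1 n, w i := by
        rw [hx n hn hnT, smul_inv_smul₀ hn0]
      have hxn1 : ((n : ℝ) + 1) • x (n + 1) = ∑ i ∈ Finset.Icc 1 (n + 1), w i := by
        rw [hx (n + 1) (Nat.le_add_left 1 n) hsT]
        push_cast
        rw [smul_inv_smul₀ hn10]
      have hweq : w (n + 1) = ((n : ℝ) + 1) • x (n + 1) - (n : ℝ) • x n := by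
        rw [hxn, hxn1, hsum]; abel
      have hvec : w (n + 1) - xstar
          = (-(n : ℝ)) • (x n - x (n + 1)) + (-(1 : ℝ)) • (xstar - x (n + 1)) := by
        rw [hweq]; module
      have hI3 : ⟪g (n + 1), w (n + 1) - xstar⟫
          = (-(n : ℝ)) * ⟪g (n + 1), x n - x (n + 1)⟫
            + (-(1 : ℝ)) * ⟪g (n + 1), xstar - x (n + 1)⟫ := by
        rw [hvec, inner_add_right, real_inner_smul_right, real_inner_smul_right]
      have h1 := hg (n + 1) (Nat.le_add_left 1 n) hsT (x n)
      have h2 := hg (n + 1) (Nat.le_add_left 1 n) hsT xstar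
      have h1n : (n : ℝ) * (f (x (n + 1)) + ⟪g (n + 1), x n - x (n + 1)⟫)
          ≤ (n : ℝ) * f (x n) :=
        mul_le_mul_of_nonneg_left h1 (by positivity)
      rw [Finset.sum_Icc_succ_top (Nat.le_add_left 1 n)]
      push_cast
      nlinarith [ih', h1n, h2, hI3]
  -- pointwise bound f (x t) - f xstar ≤ R T / t
  have hdelta : ∀ t, 1 ≤ t → t ≤ T → f (x t) - f xstar ≤ R T / t := by
    intro t ht1 htT
    have htpos : (0 : ℝ) < t := by exact_mod_cast ht1
    have h := (key t ht1 htT).trans ((hreg t ht1 htT).trans (hRmono t T ht1 htT le_rfl))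
    rw [le_div_iff₀ htpos]
    linarith [h]
  intro k hk
  set S := ∑ t ∈ Finset.Icc 1 T, (t : ℝ) ^ k with hSdef
  have hSpos : 0 < S := by
    apply Finset.sum_pos
    · intro t ht
      simp only [Finset.mem_Icc] at ht
      have : (0 : ℝ) < t := by exact_mod_cast ht.1
      positivity
    · exact ⟨1, by simp [Finset.mem_Icc, hT]⟩
  have hTpos : (0 : ℝ) < T := by exact_mod_cast hT
  -- pointwise: t^k * δ_t ≤ t^(k-1) * R T
  have hpt : ∀ t ∈ Finset.Icc 1 T,
      (t : ℝ) ^ k * (f (x t) - f xstar) ≤ (t : ℝ) ^ (k - 1) * R T := by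
    intro t ht
    simp only [Finset.mem_Icc] at ht
    have htpos : (0 : ℝ) < t := by exact_mod_cast ht.1
    have hd := hdelta t ht.1 ht.2
    have hpow : (t : ℝ) ^ k = (t : ℝ) ^ (k - 1) * t := by
      rw [← pow_succ, Nat.sub_add_cancel hk]
    calc (t : ℝ) ^ k * (f (x t) - f xstar)
        ≤ (t : ℝ) ^ k * (R T / t) :=
          mul_le_mul_of_nonneg_left hd (by positivity)
      _ = (t : ℝ) ^ (k - 1) * R T := by
          rw [hpow]; field_simp
  have hsum1 : ∑ t ∈ Finset.Icc 1 T, (t : ℝ) ^ k * (f (x t) - f xstar)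
      ≤ (∑ t ∈ Finset.Icc 1 T, (t : ℝ) ^ (k - 1)) * R T := by
    rw [Finset.sum_mul]
    exact Finset.sum_le_sum hpt
  have hsum2 : ∑ t ∈ Finset.Icc 1 T, (t : ℝ) ^ (k - 1) ≤ (T : ℝ) ^ k := by
    calc ∑ t ∈ Finset.Icc 1 T, (t : ℝ) ^ (k - 1)
        ≤ ∑ t ∈ Finset.Icc 1 T, (T : ℝ) ^ (k - 1) := by
          apply Finset.sum_le_sum
          intro t ht
          simp only [Finset.mem_Icc] at ht
          exact pow_le_pow_left₀ (by positivity) (by exact_mod_cast ht.2) _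
      _ = (T : ℝ) * (T : ℝ) ^ (k - 1) := by
          rw [Finset.sum_const, Nat.card_Icc, nsmul_eq_mul]
          norm_num
      _ = (T : ℝ) ^ k := by
          rw [← pow_succ', Nat.sub_add_cancel hk]
  have hA := sum_pow_lower_aux T k
  rw [← hSdef] at hA
  have h1 : ∑ t ∈ Finset.Icc 1 T, (t : ℝ) ^ k * (f (x t) - f xstar)
      ≤ R T * (T : ℝ) ^ k := by
    calc _ ≤ (∑ t ∈ Finset.Icc 1 T, (t : ℝ) ^ (k - 1)) * R T := hsum1
      _ ≤ (T : ℝ) ^ k * R T := mul_le_mul_of_nonneg_right hsum2 hRT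
      _ = R T * (T : ℝ) ^ k := by ring
  rw [div_le_div_iff₀ hSpos hTpos]
  calc (∑ t ∈ Finset.Icc 1 T, (t : ℝ) ^ k * (f (x t) - f xstar)) * T
      ≤ (R T * (T : ℝ) ^ k) * T := mul_le_mul_of_nonneg_right h1 (le_of_lt hTpos)
    _ = R T * (T : ℝ) ^ (k + 1) := by ring
    _ ≤ R T * (((k : ℝ) + 1) * S) := mul_le_mul_of_nonneg_left hA hRT
    _ = ((k : ℝ) + 1) * R T * S := by ring
end

section
/- (Theorem 5, deterministic version: general anytime online-to-batch.) Suppose ℒ : E → ℝ and, for each 1 ≤ t ≤ T, ℓ_t : D → ℝ is a convex function satisfying ℒ(x_t) − ℒ(x) ≤ ℓ_t(x_t) − ℓ_t(x) for all x ∈ D. Then for every x⋆ ∈ D: α_{1:T} (ℒ(x_T) − ℒ(x⋆)) ≤ Σ_{t=1}^T α_t (ℓ_t(w_t) − ℓ_t(x⋆)). -/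
/-- Theorem 5, deterministic version: general anytime online-to-batch:
if each convex `ℓ_t` satisfies `ℒ(x_t) − ℒ(x) ≤ ℓ_t(x_t) − ℓ_t(x)` on `D`, then
`α_{1:T} (ℒ(x_T) − ℒ(x⋆)) ≤ Σ_{t=1}^T α_t (ℓ_t(w_t) − ℓ_t(x⋆))`. -/
theorem general_anytime_online_to_batch_deterministic
    {E : Type*} [NormedAddCommGroup E] [InnerProductSpace ℝ E]
    (D : Set E) (hD : Convex ℝ D)
    (T : ℕ) (hT : 1 ≤ T)
    (α : ℕ → ℝ) (hα : ∀ t, 1 ≤ t → t ≤ T → 0 ≤ α t) (hα1 : 0 < α 1)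
    (w : ℕ → E) (hw : ∀ t, 1 ≤ t → t ≤ T → w t ∈ D)
    (x : ℕ → E)
    (hx : ∀ t, 1 ≤ t → t ≤ T →
      x t = (∑ i ∈ Finset.Icc 1 t, α i)⁻¹ • ∑ i ∈ Finset.Icc 1 t, α i • w i)
    (f : E → ℝ)
    (ℓ : ℕ → E → ℝ)
    (hℓconv : ∀ t, 1 ≤ t → t ≤ T → ConvexOn ℝ D (ℓ t))
    (hdom : ∀ t, 1 ≤ t → t ≤ T → ∀ y ∈ D, f (x t) - f y ≤ ℓ t (x t) - ℓ t y)
    (xstar : E) (hxstar : xstar ∈ D) :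
    (∑ t ∈ Finset.Icc 1 T, α t) * (f (x T) - f xstar)
      ≤ ∑ t ∈ Finset.Icc 1 T, α t * (ℓ t (w t) - ℓ t xstar) := by
  -- positivity of partial sums
  have spos : ∀ t, 1 ≤ t → t ≤ T → 0 < ∑ i ∈ Finset.Icc 1 t, α i := by
    intro t ht1 htT
    apply Finset.sum_pos' (fun i hi => by
      simp only [Finset.mem_Icc] at hi
      exact hα i hi.1 (le_trans hi.2 htT))
    exact ⟨1, by simp [Finset.mem_Icc, ht1], hα1⟩
  -- main induction
  have main : ∀ t, 1 ≤ t → t ≤ T →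
      x t ∈ D ∧ (∑ i ∈ Finset.Icc 1 t, α i) * (f (x t) - f xstar)
        ≤ ∑ i ∈ Finset.Icc 1 t, α i * (ℓ i (w i) - ℓ i xstar) := by
    intro t ht1
    induction t, ht1 using Nat.le_induction with
    | base =>
      intro h1T
      have hx1 : x 1 = w 1 := by
        rw [hx 1 le_rfl h1T]
        simp [smul_smul, inv_mul_cancel₀ hα1.ne']
      constructor
      · rw [hx1]; exact hw 1 le_rfl h1T
      · simp only [Finset.Icc_self, Finset.sum_singleton]
        rw [← hx1]
        exact mul_le_mul_of_nonneg_left (hdom 1 le_rfl h1T xstar hxstar) hα1.le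
    | succ t ht1 IH =>
      intro hsT
      have htT : t ≤ T := le_trans (Nat.le_succ t) hsT
      obtain ⟨hxtD, hIH⟩ := IH htT
      set s := ∑ i ∈ Finset.Icc 1 t, α i with hs
      have hsum : ∑ i ∈ Finset.Icc 1 (t+1), α i = s + α (t+1) :=
        Finset.sum_Icc_succ_top (by omega) α
      have hst : 0 < s := spos t ht1 htT
      have hst1 : (0:ℝ) < s + α (t+1) := by
        have := hα (t+1) (by omega) hsT; linarith
      have hαt1 : 0 ≤ α (t+1) := hα (t+1) (by omega) hsT
      -- combination identity for x (t+1)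
      have hSig : ∑ i ∈ Finset.Icc 1 t, α i • w i = s • x t := by
        rw [hx t ht1 htT, smul_smul, mul_inv_cancel₀ hst.ne', one_smul]
      have hcomb : x (t+1) = (s / (s + α (t+1))) • x t
          + (α (t+1) / (s + α (t+1))) • w (t+1) := by
        rw [hx (t+1) (by omega) hsT,
          Finset.sum_Icc_succ_top (show 1 ≤ t+1 by omega) (fun i => α i • w i), hSig, hsum,
          smul_add, smul_smul, smul_smul]
        congr 2 <;> field_simp
      have ha : (0:ℝ) ≤ s / (s + α (t+1)) := by positivity
      have hb : (0:ℝ) ≤ α (t+1) / (s + α (t+1)) := by positivity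
      have hab : s / (s + α (t+1)) + α (t+1) / (s + α (t+1)) = 1 := by
        field_simp
      have hxnD : x (t+1) ∈ D := by
        rw [hcomb]
        exact hD hxtD (hw (t+1) (by omega) hsT) ha hb hab
      refine ⟨hxnD, ?_⟩
      -- convexity inequality
      have hconv := (hℓconv (t+1) (by omega) hsT).2 hxtD (hw (t+1) (by omega) hsT) ha hb hab
      rw [← hcomb] at hconv
      have hconv' : (s + α (t+1)) * ℓ (t+1) (x (t+1))
          ≤ s * ℓ (t+1) (x t) + α (t+1) * ℓ (t+1) (w (t+1)) := by
        have h2 := mul_le_mul_of_nonneg_left hconv hst1.le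
        rw [smul_eq_mul, smul_eq_mul] at h2
        have e1 : (s + α (t+1)) * (s / (s + α (t+1)) * ℓ (t+1) (x t)
            + α (t+1) / (s + α (t+1)) * ℓ (t+1) (w (t+1)))
            = s * ℓ (t+1) (x t) + α (t+1) * ℓ (t+1) (w (t+1)) := by
          field_simp
        linarith
      -- domination inequalities
      have hd1 := mul_le_mul_of_nonneg_left (hdom (t+1) (by omega) hsT (x t) hxtD) hst.le
      have hd2 := mul_le_mul_of_nonneg_left (hdom (t+1) (by omega) hsT xstar hxstar) hαt1
      rw [hsum, Finset.sum_Icc_succ_top (show 1 ≤ t+1 by omega)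
        (fun i => α i * (ℓ i (w i) - ℓ i xstar))]
      nlinarith [hd1, hd2, hconv', hIH]
  exact (main T hT le_rfl).2
end

section
/- (Corollary 6, deterministic version: strongly convex losses with Follow-the-Leader.) Let D be a compact convex subset of a real Hilbert space E with diameter at most B, and let ℒ : E → ℝ be differentiable and μ-strongly convex (μ > 0) with ‖∇ℒ(x)‖ ≤ G for all x ∈ D. Take α_t = 1 for all t, let w_1 ∈ D be arbitrary, let x_t = (1/t) Σ_{i=1}^t w_i, define ℓ_t(x) = ⟨∇ℒ(x_t), x⟩ + (μ/2)‖x − x_t‖², and choose w_{t+1} ∈ argmin_{w ∈ D} Σ_{i=1}^t ℓ_i(w) for each t. Then for every x⋆ ∈ D: (a) Σ_{t=1}^T (ℓ_t(w_t) − ℓ_t(x⋆)) ≤ (μB + G)² (log T + 1)/(2μ), and (b) ℒ(x_T) − ℒ(x⋆) ≤ (μB + G)² (log T + 1)/(2μT). -/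
open scoped RealInnerProductSpace

lemma aux_small (a c : ℝ) (hc : 0 ≤ c) (h : ∀ s : ℝ, 0 < s → s ≤ 1 → 0 ≤ s * a + s^2 * c) :
    0 ≤ a := by
  by_contra h'
  push_neg at h'
  have ha : 0 < -a := by linarith
  set s : ℝ := min 1 (-a / (2 * (c + 1))) with hs
  have hs1 : 0 < s := lt_min one_pos (by positivity)
  have hs2 : s ≤ 1 := min_le_left _ _
  have hs3 : s ≤ -a / (2 * (c + 1)) := min_le_right _ _
  have key := h s hs1 hs2
  have h4 : s * (2 * (c + 1)) ≤ -a := by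
    have hpos : (0:ℝ) < 2 * (c + 1) := by linarith
    calc s * (2 * (c+1)) ≤ (-a / (2*(c+1))) * (2*(c+1)) :=
          mul_le_mul_of_nonneg_right hs3 hpos.le
      _ = -a := by field_simp
  nlinarith [mul_pos hs1 hs1, sq_nonneg s]

lemma aux_harm (T : ℕ) : ∑ t ∈ Finset.Icc 1 T, ((t:ℝ))⁻¹ ≤ Real.log T + 1 := by
  have h := harmonic_le_one_add_log T
  rw [harmonic_eq_sum_Icc] at h
  push_cast at h
  linarith

lemma aux_tel (T : ℕ) (φ : ℕ → ℝ) :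
    ∑ t ∈ Finset.Icc 1 T, (φ t - φ (t-1)) = φ T - φ 0 := by
  induction T with
  | zero => simp
  | succ n ih =>
    rw [Finset.sum_Icc_succ_top (by omega), ih]
    simp only [Nat.add_sub_cancel]
    ring

lemma aux_expand {E : Type*} [NormedAddCommGroup E] [InnerProductSpace ℝ E]
    (g c z d : E) (μ s : ℝ) :
    ⟪g, z + s • d⟫ + μ/2 * ‖(z + s • d) - c‖^2
      = (⟪g, z⟫ + μ/2 * ‖z - c‖^2) + s * ⟪g + μ • (z - c), d⟫ + s^2 * (μ/2 * ‖d‖^2) := by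
  have h1 : z + s • d - c = (z - c) + s • d := by abel
  rw [h1, norm_add_sq_real, inner_add_right, real_inner_smul_right, inner_add_left,
    real_inner_smul_left, real_inner_smul_right, norm_smul]
  simp only [Real.norm_eq_abs]
  rw [mul_pow, sq_abs, real_inner_comm d (z - c)]
  ring

set_option maxHeartbeats 1600000 in
/-- Corollary 6, deterministic version: strongly convex losses with
Follow-the-Leader, unit weights. -/
theorem ftl_strongly_convex
    {E : Type*} [NormedAddCommGroup E] [InnerProductSpace ℝ E] [CompleteSpace E]
    (D : Set E) (hDconv : Convex ℝ D) (hDcomp : IsCompact D)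
    (B : ℝ) (hdiam : ∀ u ∈ D, ∀ v ∈ D, ‖u - v‖ ≤ B)
    (μ G : ℝ) (hμ : 0 < μ)
    (f : E → ℝ) (hdiff : Differentiable ℝ f)
    (hstrong : ∀ y δ : E, f (y + δ) ≥ f y + ⟪gradient f y, δ⟫ + μ / 2 * ‖δ‖ ^ 2)
    (hgradbound : ∀ y ∈ D, ‖gradient f y‖ ≤ G)
    (T : ℕ) (hT : 1 ≤ T)
    (w : ℕ → E) (hw1 : w 1 ∈ D)
    (x : ℕ → E)
    (hx : ∀ t, 1 ≤ t → t ≤ T → x t = (t : ℝ)⁻¹ • ∑ i ∈ Finset.Icc 1 t, w i)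
    (ℓ : ℕ → E → ℝ)
    (hℓ : ∀ t, 1 ≤ t → t ≤ T → ∀ y : E,
      ℓ t y = ⟪gradient f (x t), y⟫ + μ / 2 * ‖y - x t‖ ^ 2)
    (hftl : ∀ t, 1 ≤ t → t < T → w (t + 1) ∈ D ∧
      ∀ v ∈ D, ∑ i ∈ Finset.Icc 1 t, ℓ i (w (t + 1)) ≤ ∑ i ∈ Finset.Icc 1 t, ℓ i v)
    (xstar : E) (hxstar : xstar ∈ D) :
    (∑ t ∈ Finset.Icc 1 T, (ℓ t (w t) - ℓ t xstar)
        ≤ (μ * B + G) ^ 2 * (Real.log T + 1) / (2 * μ)) ∧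
    (f (x T) - f xstar ≤ (μ * B + G) ^ 2 * (Real.log T + 1) / (2 * μ * T)) := by
  have hB : 0 ≤ B := by simpa using hdiam (w 1) hw1 (w 1) hw1
  have hG : 0 ≤ G := le_trans (norm_nonneg _) (hgradbound (w 1) hw1)
  have hwD : ∀ t, 1 ≤ t → t ≤ T → w t ∈ D := by
    intro t h1 h2
    match t, h1 with
    | 1, _ => exact hw1
    | (s+2), _ => exact (hftl (s+1) (by omega) (by omega)).1
  have hxD : ∀ t, 1 ≤ t → t ≤ T → x t ∈ D := by
    intro t h1 h2
    rw [hx t h1 h2, Finset.smul_sum]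
    refine hDconv.sum_mem (fun i _ => by positivity) ?_
      (fun i hi => hwD i (Finset.mem_Icc.mp hi).1 (le_trans (Finset.mem_Icc.mp hi).2 h2))
    rw [Finset.sum_const, Nat.card_Icc, Nat.add_sub_cancel, nsmul_eq_mul]
    have : (t:ℝ) ≠ 0 := by positivity
    field_simp
  have hexp : ∀ i, 1 ≤ i → i ≤ T → ∀ z d : E, ∀ s : ℝ,
      ℓ i (z + s • d) = ℓ i z + s * ⟪gradient f (x i) + μ • (z - x i), d⟫
        + s^2 * (μ/2 * ‖d‖^2) := by
    intro i h1 h2 z d s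
    rw [hℓ i h1 h2, hℓ i h1 h2, aux_expand]
  have hq : ∀ t, 1 ≤ t → t ≤ T → ∀ z ∈ D, ‖gradient f (x t) + μ • (z - x t)‖ ≤ μ * B + G := by
    intro t h1 h2 z hz
    calc ‖gradient f (x t) + μ • (z - x t)‖
        ≤ ‖gradient f (x t)‖ + ‖μ • (z - x t)‖ := norm_add_le _ _
      _ = ‖gradient f (x t)‖ + μ * ‖z - x t‖ := by
          rw [norm_smul, Real.norm_eq_abs, abs_of_pos hμ]
      _ ≤ G + μ * B := by
          have h3 := hgradbound (x t) (hxD t h1 h2)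
          have h4 := hdiam z hz (x t) (hxD t h1 h2)
          nlinarith
      _ = μ * B + G := by ring
  have hiplb : ∀ t, 1 ≤ t → t ≤ T → ∀ z ∈ D, ∀ d : E,
      -⟪gradient f (x t) + μ • (z - x t), d⟫ ≤ (μ*B+G) * ‖d‖ := by
    intro t h1 h2 z hz d
    calc -⟪gradient f (x t) + μ • (z - x t), d⟫
        ≤ |⟪gradient f (x t) + μ • (z - x t), d⟫| := neg_le_abs _
      _ ≤ ‖gradient f (x t) + μ • (z - x t)‖ * ‖d‖ := abs_real_inner_le_norm _ _
      _ ≤ (μ*B+G) * ‖d‖ := mul_le_mul_of_nonneg_right (hq t h1 h2 z hz) (norm_nonneg d)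
  have hsumexp : ∀ t, t ≤ T → ∀ z d : E, ∀ s : ℝ,
      ∑ i ∈ Finset.Icc 1 t, ℓ i (z + s • d)
        = ∑ i ∈ Finset.Icc 1 t, ℓ i z
          + s * (∑ i ∈ Finset.Icc 1 t, ⟪gradient f (x i) + μ • (z - x i), d⟫)
          + s^2 * ((t:ℝ) * (μ/2 * ‖d‖^2)) := by
    intro t ht z d s
    rw [Finset.sum_congr rfl (fun i hi => hexp i (Finset.mem_Icc.mp hi).1
        (le_trans (Finset.mem_Icc.mp hi).2 ht) z d s)]
    rw [Finset.sum_add_distrib, Finset.sum_add_distrib, ← Finset.mul_sum,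
      Finset.sum_const, Nat.card_Icc, Nat.add_sub_cancel, nsmul_eq_mul]
    ring
  have hVI : ∀ t, t < T → ∀ v ∈ D,
      0 ≤ ∑ i ∈ Finset.Icc 1 t, ⟪gradient f (x i) + μ • (w (t+1) - x i), v - w (t+1)⟫ := by
    intro t ht v hv
    rcases Nat.eq_zero_or_pos t with h0 | h1
    · subst h0; simp
    · obtain ⟨hwm, hmin⟩ := hftl t h1 ht
      refine aux_small _ ((t:ℝ) * (μ/2 * ‖v - w (t+1)‖^2)) (by positivity) ?_
      intro s hs0 hs1
      have hmem : w (t+1) + s • (v - w (t+1)) ∈ D := by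
        have h : w (t+1) + s • (v - w (t+1)) = (1-s) • w (t+1) + s • v := by module
        rw [h]; exact hDconv hwm hv (by linarith) hs0.le (by ring)
      have h2 := hmin _ hmem
      rw [hsumexp t ht.le (w (t+1)) (v - w (t+1)) s] at h2
      linarith
  have hMIN : ∀ t, t < T → ∀ v ∈ D,
      (∑ i ∈ Finset.Icc 1 t, ℓ i (w (t+1))) + (t:ℝ) * (μ/2 * ‖v - w (t+1)‖^2)
        ≤ ∑ i ∈ Finset.Icc 1 t, ℓ i v := by
    intro t ht v hv
    have hA := hVI t ht v hv
    have h3 := hsumexp t ht.le (w (t+1)) (v - w (t+1)) 1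
    have hv' : w (t+1) + (1:ℝ) • (v - w (t+1)) = v := by module
    rw [hv', one_pow, one_mul, one_mul] at h3
    linarith
  have hFstep : ∀ t, 1 ≤ t → t < T →
      (∑ i ∈ Finset.Icc 1 t, ℓ i (w t)) - (∑ i ∈ Finset.Icc 1 t, ℓ i (w (t+1)))
        ≤ (μ*B+G)^2/(2*μ*(t:ℝ)) := by
    intro t h1 ht
    obtain ⟨k, rfl⟩ : ∃ k, t = k + 1 := ⟨t - 1, by omega⟩
    set d := w (k+2) - w (k+1) with hd
    have hmm : w (k+1) + (1:ℝ) • d = w (k+2) := by rw [hd]; module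
    have h3 := hsumexp (k+1) ht.le (w (k+1)) d 1
    rw [hmm, one_pow, one_mul, one_mul] at h3
    have hsplit := Finset.sum_Icc_succ_top (show 1 ≤ k+1 by omega)
      (fun i => ⟪gradient f (x i) + μ • (w (k+1) - x i), d⟫)
    rw [hsplit] at h3
    have hA := hVI k (by omega) (w (k+2)) (hwD (k+2) (by omega) (by omega))
    have hnd := hiplb (k+1) (by omega) (by omega) (w (k+1))
      (hwD (k+1) (by omega) (by omega)) d
    have hkey : (∑ i ∈ Finset.Icc 1 (k+1), ℓ i (w (k+1)))
        - (∑ i ∈ Finset.Icc 1 (k+1), ℓ i (w (k+2)))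
        ≤ (μ*B+G) * ‖d‖ - ((k:ℝ)+1) * (μ/2 * ‖d‖^2) := by
      push_cast at h3
      linarith
    refine le_trans hkey ?_
    push_cast
    rw [le_div_iff₀ (by positivity)]
    nlinarith [sq_nonneg ((μ*B+G) - ((k:ℝ)+1)*μ*‖d‖), norm_nonneg d,
      sq_nonneg ‖d‖, mul_pos hμ (show (0:ℝ) < (k:ℝ)+1 by positivity)]
  have hR' : ∀ k, k < T →
      (∑ t ∈ Finset.Icc 1 k, ℓ t (w t)) - (∑ i ∈ Finset.Icc 1 k, ℓ i (w (k+1)))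
        ≤ ∑ t ∈ Finset.Icc 1 k, (μ*B+G)^2/(2*μ*(t:ℝ)) := by
    intro k
    induction k with
    | zero => intro _; simp
    | succ n ih =>
      intro h
      have ihh := ih (by omega)
      have hF := hFstep (n+1) (by omega) h
      have e1 := Finset.sum_Icc_succ_top (show 1 ≤ n+1 by omega) (fun t => ℓ t (w t))
      have e2 := Finset.sum_Icc_succ_top (show 1 ≤ n+1 by omega) (fun i => ℓ i (w (n+1)))
      have e3 := Finset.sum_Icc_succ_top (show 1 ≤ n+1 by omega)
        (fun t : ℕ => (μ*B+G)^2/(2*μ*(t:ℝ)))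
      rw [e1, e3]
      rw [e2] at hF
      linarith
  have hregsum : ∑ t ∈ Finset.Icc 1 T, (ℓ t (w t) - ℓ t xstar)
      ≤ ∑ t ∈ Finset.Icc 1 T, (μ*B+G)^2/(2*μ*(t:ℝ)) := by
    obtain ⟨S, rfl⟩ : ∃ S, T = S + 1 := ⟨T-1, by omega⟩
    have hmin := hMIN S (by omega) xstar hxstar
    have hr := hR' S (by omega)
    set d := xstar - w (S+1) with hd
    have hmm : w (S+1) + (1:ℝ) • d = xstar := by rw [hd]; module
    have hlast := hexp (S+1) (by omega) (le_refl _) (w (S+1)) d 1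
    rw [hmm, one_pow, one_mul, one_mul] at hlast
    have hnd := hiplb (S+1) (by omega) (le_refl _) (w (S+1))
      (hwD (S+1) (by omega) (le_refl _)) d
    have hnum : (μ*B+G) * ‖d‖ - ((S:ℝ)+1) * (μ/2 * ‖d‖^2)
        ≤ (μ*B+G)^2/(2*μ*((S:ℝ)+1)) := by
      rw [le_div_iff₀ (by positivity)]
      nlinarith [sq_nonneg ((μ*B+G) - ((S:ℝ)+1)*μ*‖d‖), norm_nonneg d,
        sq_nonneg ‖d‖, mul_pos hμ (show (0:ℝ) < (S:ℝ)+1 by positivity)]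
    have e1 := Finset.sum_Icc_succ_top (show 1 ≤ S+1 by omega)
      (fun t => ℓ t (w t) - ℓ t xstar)
    have e2 := Finset.sum_Icc_succ_top (show 1 ≤ S+1 by omega) (fun t => ℓ t xstar)
    have e3 := Finset.sum_Icc_succ_top (show 1 ≤ S+1 by omega)
      (fun t : ℕ => (μ*B+G)^2/(2*μ*(t:ℝ)))
    rw [e1, e3, Finset.sum_sub_distrib]
    push_cast
    push_cast at hnum hmin hr
    linarith [hlast, hnd]
  have hAbound : ∑ t ∈ Finset.Icc 1 T, (μ*B+G)^2/(2*μ*(t:ℝ))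
      ≤ (μ * B + G) ^ 2 * (Real.log T + 1) / (2 * μ) := by
    have h1 : ∀ t ∈ Finset.Icc 1 T, (μ*B+G)^2/(2*μ*(t:ℝ))
        = (μ*B+G)^2/(2*μ) * ((t:ℝ))⁻¹ := by
      intro t ht
      have h2 : 1 ≤ t := (Finset.mem_Icc.mp ht).1
      have : (t:ℝ) ≠ 0 := by positivity
      field_simp
    rw [Finset.sum_congr rfl h1, ← Finset.mul_sum]
    calc (μ*B+G)^2/(2*μ) * ∑ t ∈ Finset.Icc 1 T, ((t:ℝ))⁻¹
        ≤ (μ*B+G)^2/(2*μ) * (Real.log T + 1) :=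
          mul_le_mul_of_nonneg_left (aux_harm T) (by positivity)
      _ = (μ * B + G) ^ 2 * (Real.log T + 1) / (2 * μ) := by ring
  have ha := le_trans hregsum hAbound
  refine ⟨ha, ?_⟩
  -- part (b)
  have hb : (T:ℝ) * (f (x T) - f xstar) ≤ ∑ t ∈ Finset.Icc 1 T, (ℓ t (w t) - ℓ t xstar) := by
    set φ : ℕ → ℝ := fun t => (t:ℝ) * f (x t) with hφ
    have hterm : ∀ t ∈ Finset.Icc 1 T, φ t - φ (t-1) - f xstar ≤ ℓ t (w t) - ℓ t xstar := by
      intro t ht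
      obtain ⟨h1, h2⟩ := Finset.mem_Icc.mp ht
      have hs1 := hstrong (x t) (xstar - x t)
      rw [show x t + (xstar - x t) = xstar by abel] at hs1
      have hl1 := hexp t h1 h2 (x t) (w t - x t) 1
      rw [show x t + (1:ℝ) • (w t - x t) = w t by module, one_pow, one_mul, one_mul] at hl1
      have hl2 := hexp t h1 h2 (x t) (xstar - x t) 1
      rw [show x t + (1:ℝ) • (xstar - x t) = xstar by module, one_pow, one_mul, one_mul] at hl2
      simp only [sub_self, smul_zero, add_zero] at hl1 hl2
      rcases Nat.lt_or_ge t 2 with hc | hc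
      · have ht1 : t = 1 := by omega
        subst ht1
        have hx1 : x 1 = w 1 := by
          rw [hx 1 (le_refl _) h2]; simp
        have hzero : w 1 - x 1 = 0 := by rw [hx1, sub_self]
        rw [hzero] at hl1
        simp only [inner_zero_right, norm_zero, hφ] at hl1 ⊢
        push_cast
        have hn2 : (μ/2) * ‖xstar - x 1‖^2 ≥ 0 := by positivity
        linarith [hs1, hl2]
      · obtain ⟨m, rfl⟩ : ∃ m, t = m + 2 := ⟨t - 2, by omega⟩
        have hxt := hx (m+2) h1 h2
        have hxt1 := hx (m+1) (by omega) (by omega)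
        have hid : w (m+2) - x (m+2) = ((m:ℝ)+1) • (x (m+2) - x (m+1)) := by
          have hne : ((m:ℝ)+2) ≠ 0 := by positivity
          have hne1 : ((m:ℝ)+1) ≠ 0 := by positivity
          have e : ((m:ℝ)+2) • x (m+2) = ∑ i ∈ Finset.Icc 1 (m+2), w i := by
            rw [hxt]
            rw [smul_smul]
            push_cast
            rw [mul_inv_cancel₀ (by positivity), one_smul]
          have e' : ((m:ℝ)+1) • x (m+1) = ∑ i ∈ Finset.Icc 1 (m+1), w i := by
            rw [hxt1, smul_smul]
            push_cast
            rw [mul_inv_cancel₀ (by positivity), one_smul]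
          have esum : ∑ i ∈ Finset.Icc 1 (m+2), w i
              = ∑ i ∈ Finset.Icc 1 (m+1), w i + w (m+2) :=
            Finset.sum_Icc_succ_top (by omega) _
          have ew : w (m+2) = ((m:ℝ)+2) • x (m+2) - ((m:ℝ)+1) • x (m+1) := by
            rw [e, e', esum]; abel
          rw [ew]
          module
        have hs2 := hstrong (x (m+2)) (x (m+1) - x (m+2))
        rw [show x (m+2) + (x (m+1) - x (m+2)) = x (m+1) by abel] at hs2
        have hip : ⟪gradient f (x (m+2)), w (m+2) - x (m+2)⟫
            = ((m:ℝ)+1) * ⟪gradient f (x (m+2)), x (m+2) - x (m+1)⟫ := by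
          rw [hid, real_inner_smul_right]
        have hip2 : ⟪gradient f (x (m+2)), x (m+1) - x (m+2)⟫
            = -⟪gradient f (x (m+2)), x (m+2) - x (m+1)⟫ := by
          rw [show x (m+1) - x (m+2) = -(x (m+2) - x (m+1)) by abel, inner_neg_right]
        rw [hip2] at hs2
        have hlb : f (x (m+2)) - f (x (m+1))
            ≤ ⟪gradient f (x (m+2)), x (m+2) - x (m+1)⟫ := by
          nlinarith [sq_nonneg ‖x (m+1) - x (m+2)‖, hμ]
        have hmul : ((m:ℝ)+1) * (f (x (m+2)) - f (x (m+1)))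
            ≤ ((m:ℝ)+1) * ⟪gradient f (x (m+2)), x (m+2) - x (m+1)⟫ :=
          mul_le_mul_of_nonneg_left hlb (by positivity)
        simp only [hφ]
        push_cast
        have hn1 : (μ/2) * ‖w (m+2) - x (m+2)‖^2 ≥ 0 := by positivity
        have hn2 : (μ/2) * ‖xstar - x (m+2)‖^2 ≥ 0 := by positivity
        linarith [hs1, hl1, hl2, hip, hmul]
    have hsum := Finset.sum_le_sum hterm
    have e : ∑ t ∈ Finset.Icc 1 T, (φ t - φ (t-1) - f xstar)
        = φ T - φ 0 - T * f xstar := by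
      calc ∑ t ∈ Finset.Icc 1 T, (φ t - φ (t-1) - f xstar)
          = ∑ t ∈ Finset.Icc 1 T, (φ t - φ (t-1))
            - ∑ _t ∈ Finset.Icc 1 T, f xstar := by rw [Finset.sum_sub_distrib]
        _ = φ T - φ 0 - T * f xstar := by
            rw [aux_tel, Finset.sum_const, Nat.card_Icc, Nat.add_sub_cancel, nsmul_eq_mul]
    rw [e] at hsum
    simp only [hφ, Nat.cast_zero, zero_mul, sub_zero] at hsum
    linarith
  have h5 := le_trans hb ha
  have hT0 : (0:ℝ) < T := by exact_mod_cast hT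
  rw [le_div_iff₀ (by positivity)]
  have h6 : (f (x T) - f xstar) * (2*μ*T) = (2*μ) * ((T:ℝ) * (f (x T) - f xstar)) := by ring
  rw [h6]
  calc (2*μ) * ((T:ℝ) * (f (x T) - f xstar))
      ≤ (2*μ) * ((μ * B + G) ^ 2 * (Real.log T + 1) / (2 * μ)) :=
        mul_le_mul_of_nonneg_left h5 (by positivity)
    _ = (μ * B + G) ^ 2 * (Real.log T + 1) := by field_simp
end

section
/- (Corollary 7, deterministic version: no log factor via weights α_t = t.) Let D be a compact convex subset of a real Hilbert space E with diameter at most B, and let ℒ : E → ℝ be differentiable and μ-strongly convex (μ > 0) with ‖∇ℒ(x)‖ ≤ G for all x ∈ D. Take α_t = t, let w_1 ∈ D be arbitrary, let x_t = (Σ_{i=1}^t i · w_i)/(Σ_{i=1}^t i), define ℓ_t(x) = ⟨∇ℒ(x_t), x⟩ + (μ/2)‖x − x_t‖², and choose w_{t+1} ∈ argmin_{w ∈ D} Σ_{i=1}^t i · ℓ_i(w) for each t. Then for every x⋆ ∈ D: (a) Σ_{t=1}^T t (ℓ_t(w_t) − ℓ_t(x⋆)) ≤ T (μB + G)²/μ,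 and (b) ℒ(x_T) − ℒ(x⋆) ≤ 2(μB + G)²/(μ(T+1)). -/
open scoped RealInnerProductSpace
open Finset

private lemma quad_expand' {E : Type*} [NormedAddCommGroup E] [InnerProductSpace ℝ E]
    (g u d e : E) (μ : ℝ) :
    ⟪g, u + d⟫ + μ / 2 * ‖d + e‖ ^ 2
      = (⟪g, u⟫ + μ / 2 * ‖e‖ ^ 2) + ⟪g + μ • e, d⟫ + μ / 2 * ‖d‖ ^ 2 := by
  rw [inner_add_right, norm_add_sq_real, inner_add_left, real_inner_smul_left,
    real_inner_comm d e]
  ring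

private lemma quad_expand {E : Type*} [NormedAddCommGroup E] [InnerProductSpace ℝ E]
    (g xx u v : E) (μ : ℝ) :
    ⟪g, v⟫ + μ / 2 * ‖v - xx‖ ^ 2
      = (⟪g, u⟫ + μ / 2 * ‖u - xx‖ ^ 2) + ⟪g + μ • (u - xx), v - u⟫
        + μ / 2 * ‖v - u‖ ^ 2 := by
  have h := quad_expand' g u (v - u) (u - xx) μ
  have e1 : u + (v - u) = v := by abel
  have e2 : (v - u) + (u - xx) = v - xx := by abel
  rw [e1, e2] at h
  linarith

private lemma nonneg_of_small {p K : ℝ} (hK : 0 ≤ K)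
    (h : ∀ l : ℝ, 0 < l → l ≤ 1 → 0 ≤ l * p + K * l ^ 2) : 0 ≤ p := by
  by_contra hp
  push_neg at hp
  have hd : 0 < -p / (2 * K + 1) := div_pos (by linarith) (by linarith)
  set l := min 1 (-p / (2 * K + 1)) with hl
  have hl0 : 0 < l := lt_min one_pos hd
  have hl1 : l ≤ 1 := min_le_left _ _
  have hl2 : l * (2 * K + 1) ≤ -p := by
    have h5 := min_le_right 1 (-p / (2 * K + 1))
    calc l * (2 * K + 1) ≤ (-p / (2 * K + 1)) * (2 * K + 1) := by nlinarith
      _ = -p := by field_simp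
  have h0 := h l hl0 hl1
  nlinarith [mul_le_mul_of_nonneg_left hl2 hl0.le, mul_pos hl0 hl0]

set_option maxHeartbeats 1000000 in
/-- Corollary 7, deterministic version: no log factor via weights
`α_t = t`. -/
theorem ftl_strongly_convex_weighted
    {E : Type*} [NormedAddCommGroup E] [InnerProductSpace ℝ E] [CompleteSpace E]
    (D : Set E) (hDconv : Convex ℝ D) (hDcomp : IsCompact D)
    (B : ℝ) (hdiam : ∀ u ∈ D, ∀ v ∈ D, ‖u - v‖ ≤ B)
    (μ G : ℝ) (hμ : 0 < μ)
    (f : E → ℝ) (hdiff : Differentiable ℝ f)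
    (hstrong : ∀ y δ : E, f (y + δ) ≥ f y + ⟪gradient f y, δ⟫ + μ / 2 * ‖δ‖ ^ 2)
    (hgradbound : ∀ y ∈ D, ‖gradient f y‖ ≤ G)
    (T : ℕ) (hT : 1 ≤ T)
    (w : ℕ → E) (hw1 : w 1 ∈ D)
    (x : ℕ → E)
    (hx : ∀ t, 1 ≤ t → t ≤ T →
      x t = (∑ i ∈ Finset.Icc 1 t, (i : ℝ))⁻¹ • ∑ i ∈ Finset.Icc 1 t, (i : ℝ) • w i)
    (ℓ : ℕ → E → ℝ)
    (hℓ : ∀ t, 1 ≤ t → t ≤ T → ∀ y : E,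
      ℓ t y = ⟪gradient f (x t), y⟫ + μ / 2 * ‖y - x t‖ ^ 2)
    (hftl : ∀ t, 1 ≤ t → t < T → w (t + 1) ∈ D ∧
      ∀ v ∈ D, ∑ i ∈ Finset.Icc 1 t, (i : ℝ) * ℓ i (w (t + 1))
        ≤ ∑ i ∈ Finset.Icc 1 t, (i : ℝ) * ℓ i v)
    (xstar : E) (hxstar : xstar ∈ D) :
    (∑ t ∈ Finset.Icc 1 T, (t : ℝ) * (ℓ t (w t) - ℓ t xstar)
        ≤ T * (μ * B + G) ^ 2 / μ) ∧
    (f (x T) - f xstar ≤ 2 * (μ * B + G) ^ 2 / (μ * (T + 1))) := by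
  have hB0 : 0 ≤ B := by
    have h := hdiam (w 1) hw1 (w 1) hw1
    simpa using h
  have hG0 : 0 ≤ G := le_trans (norm_nonneg _) (hgradbound (w 1) hw1)
  obtain ⟨C, hCdef⟩ : ∃ c : ℝ, c = μ * B + G := ⟨_, rfl⟩
  rw [← hCdef]
  have hC0 : 0 ≤ C := by rw [hCdef]; nlinarith
  -- all iterates are in D
  have hwD : ∀ t, 1 ≤ t → t ≤ T → w t ∈ D := by
    intro t h1 h2
    rcases eq_or_lt_of_le h1 with h | h
    · rw [← h]; exact hw1
    · obtain ⟨s, rfl⟩ : ∃ s, t = s + 2 := ⟨t - 2, by omega⟩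
      exact (hftl (s + 1) (by omega) (by omega)).1
  have hAval : ∀ n : ℕ, (∑ i ∈ Icc 1 n, (i : ℝ)) = n * (n + 1) / 2 := by
    intro n
    induction n with
    | zero => simp
    | succ k ih =>
      rw [Finset.sum_Icc_succ_top (by omega) (fun i : ℕ => (i : ℝ)), ih]
      push_cast
      ring
  have hApos : ∀ n : ℕ, 1 ≤ n → 0 < ∑ i ∈ Icc 1 n, (i : ℝ) := by
    intro n hn
    rw [hAval n]
    have h1 : (1 : ℝ) ≤ n := by exact_mod_cast hn
    nlinarith
  have hxD : ∀ t, 1 ≤ t → t ≤ T → x t ∈ D := by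
    intro t h1 h2
    rw [hx t h1 h2]
    have h := hDconv.centerMass_mem (t := Icc 1 t) (w := fun i : ℕ => (i : ℝ)) (z := w)
      (fun i _ => by positivity) (hApos t h1)
      (fun i hi => hwD i (mem_Icc.mp hi).1 ((mem_Icc.mp hi).2.trans h2))
    simpa [Finset.centerMass] using h
  -- gradient of the surrogate losses is bounded by C on D
  have hgC : ∀ t, 1 ≤ t → t ≤ T → ∀ u ∈ D,
      ‖gradient f (x t) + μ • (u - x t)‖ ≤ C := by
    intro t h1 h2 u hu
    have h3 := hgradbound (x t) (hxD t h1 h2)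
    have h4 : ‖u - x t‖ ≤ B := hdiam u hu (x t) (hxD t h1 h2)
    calc ‖gradient f (x t) + μ • (u - x t)‖
        ≤ ‖gradient f (x t)‖ + ‖μ • (u - x t)‖ := norm_add_le _ _
      _ = ‖gradient f (x t)‖ + μ * ‖u - x t‖ := by
          rw [norm_smul, Real.norm_eq_abs, abs_of_pos hμ]
      _ ≤ G + μ * B := by
          have h5 := mul_le_mul_of_nonneg_left h4 hμ.le
          linarith
      _ = C := by rw [hCdef]; ring
  -- exact quadratic expansion of the weighted cumulative losses
  have hquad : ∀ n, 1 ≤ n → n ≤ T → ∀ u v : E,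
      (∑ t ∈ Icc 1 n, (t : ℝ) * ℓ t v)
        = (∑ t ∈ Icc 1 n, (t : ℝ) * ℓ t u)
          + ⟪∑ t ∈ Icc 1 n, (t : ℝ) • (gradient f (x t) + μ • (u - x t)), v - u⟫
          + μ * (∑ t ∈ Icc 1 n, (t : ℝ)) / 2 * ‖v - u‖ ^ 2 := by
    intro n hn1 hn u v
    have hterm : ∀ i ∈ Icc 1 n, (i : ℝ) * ℓ i v
        = (i : ℝ) * ℓ i u + ⟪(i : ℝ) • (gradient f (x i) + μ • (u - x i)), v - u⟫
          + (i : ℝ) * (μ / 2 * ‖v - u‖ ^ 2) := by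
      intro i hi
      obtain ⟨hi1, hi2⟩ := mem_Icc.mp hi
      rw [hℓ i hi1 (hi2.trans hn) v, hℓ i hi1 (hi2.trans hn) u,
        quad_expand (gradient f (x i)) (x i) u v μ, real_inner_smul_left]
      ring
    rw [Finset.sum_congr rfl hterm, Finset.sum_add_distrib, Finset.sum_add_distrib,
      ← Finset.sum_mul, sum_inner]
    ring
  -- first-order optimality of the FTL iterates
  have hopt : ∀ n, 1 ≤ n → n < T → ∀ v ∈ D,
      0 ≤ ⟪∑ t ∈ Icc 1 n, (t : ℝ) • (gradient f (x t) + μ • (w (n + 1) - x t)),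
            v - w (n + 1)⟫ := by
    intro n h1 h2 v hv
    have hw' : w (n + 1) ∈ D := hwD (n + 1) (by omega) (by omega)
    have hS0 : (0 : ℝ) ≤ ∑ i ∈ Icc 1 n, (i : ℝ) := (hApos n h1).le
    have hK0 : (0 : ℝ) ≤ μ * (∑ i ∈ Icc 1 n, (i : ℝ)) / 2 * ‖v - w (n + 1)‖ ^ 2 := by
      apply mul_nonneg _ (sq_nonneg _)
      apply div_nonneg (mul_nonneg hμ.le hS0) (by norm_num)
    apply nonneg_of_small hK0
    intro l hl0 hl1
    have hmem : w (n + 1) + l • (v - w (n + 1)) ∈ D := by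
      have hcomb := hDconv hw' hv (by linarith : (0 : ℝ) ≤ 1 - l) hl0.le (by ring)
      have heq : (1 - l) • w (n + 1) + l • v = w (n + 1) + l • (v - w (n + 1)) := by
        module
      rwa [heq] at hcomb
    have hmin := (hftl n h1 h2).2 _ hmem
    rw [hquad n h1 (le_of_lt h2) (w (n + 1)) (w (n + 1) + l • (v - w (n + 1)))] at hmin
    simp only [add_sub_cancel_left] at hmin
    rw [real_inner_smul_right] at hmin
    have hns : ‖l • (v - w (n + 1))‖ = l * ‖v - w (n + 1)‖ := by
      rw [norm_smul, Real.norm_eq_abs, abs_of_pos hl0]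
    rw [hns] at hmin
    nlinarith [hmin]
  -- per-step bound for FTL
  have hstep : ∀ n, 1 ≤ n → n < T → ∀ v ∈ D,
      (∑ t ∈ Icc 1 (n + 1), (t : ℝ) * ℓ t (w (n + 1)))
        ≤ (∑ t ∈ Icc 1 (n + 1), (t : ℝ) * ℓ t v) + C ^ 2 / μ := by
    intro n h1 h2 v hv
    have hw' : w (n + 1) ∈ D := hwD (n + 1) (by omega) (by omega)
    have hq := hquad (n + 1) (by omega) (by omega) (w (n + 1)) v
    rw [hq]
    have hsplit : (∑ t ∈ Icc 1 (n + 1), (t : ℝ) • (gradient f (x t) + μ • (w (n + 1) - x t)))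
        = (∑ t ∈ Icc 1 n, (t : ℝ) • (gradient f (x t) + μ • (w (n + 1) - x t)))
          + ((n + 1 : ℕ) : ℝ) • (gradient f (x (n + 1)) + μ • (w (n + 1) - x (n + 1))) :=
      Finset.sum_Icc_succ_top (by omega) _
    rw [hsplit, inner_add_left, real_inner_smul_left]
    have hP := hopt n h1 h2 v hv
    have hqb := hgC (n + 1) (by omega) (by omega) (w (n + 1)) hw'
    have hip : -(C * ‖v - w (n + 1)‖)
        ≤ ⟪gradient f (x (n + 1)) + μ • (w (n + 1) - x (n + 1)), v - w (n + 1)⟫ := by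
      have h5 := abs_real_inner_le_norm
        (gradient f (x (n + 1)) + μ • (w (n + 1) - x (n + 1))) (v - w (n + 1))
      have h6 := mul_le_mul_of_nonneg_right hqb (norm_nonneg (v - w (n + 1)))
      have h7 := neg_abs_le
        ⟪gradient f (x (n + 1)) + μ • (w (n + 1) - x (n + 1)), v - w (n + 1)⟫
      linarith
    have hm0 : (0 : ℝ) ≤ ((n + 1 : ℕ) : ℝ) := Nat.cast_nonneg _
    have hip' := mul_le_mul_of_nonneg_left hip hm0
    have hSv : (∑ i ∈ Icc 1 (n + 1), (i : ℝ)) = ((n : ℝ) + 1) * ((n : ℝ) + 2) / 2 := by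
      rw [hAval]
      push_cast
      ring
    rw [hSv]
    have hr : C ^ 2 = μ * (C ^ 2 / μ) := by field_simp
    have hscalar : 0 ≤ -(((n : ℝ) + 1) * (C * ‖v - w (n + 1)‖))
        + μ * (((n : ℝ) + 1) * ((n : ℝ) + 2) / 2) / 2 * ‖v - w (n + 1)‖ ^ 2 + C ^ 2 / μ := by
      have h4 : 0 ≤ (μ * ((n : ℝ) + 1) * ‖v - w (n + 1)‖ - 2 * C) ^ 2
          + μ * μ * ((n : ℝ) + 1) * ‖v - w (n + 1)‖ ^ 2 := by positivity
      have h5 : 4 * μ * (-(((n : ℝ) + 1) * (C * ‖v - w (n + 1)‖))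
            + μ * (((n : ℝ) + 1) * ((n : ℝ) + 2) / 2) / 2 * ‖v - w (n + 1)‖ ^ 2 + C ^ 2 / μ)
          = (μ * ((n : ℝ) + 1) * ‖v - w (n + 1)‖ - 2 * C) ^ 2
            + μ * μ * ((n : ℝ) + 1) * ‖v - w (n + 1)‖ ^ 2 := by
        linear_combination (-4 : ℝ) * hr
      have h6 : 4 * μ * (0 : ℝ) ≤ 4 * μ * (-(((n : ℝ) + 1) * (C * ‖v - w (n + 1)‖))
          + μ * (((n : ℝ) + 1) * ((n : ℝ) + 2) / 2) / 2 * ‖v - w (n + 1)‖ ^ 2 + C ^ 2 / μ) := by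
        rw [h5]; linarith
      have h7 := le_of_mul_le_mul_left h6 (by linarith : (0 : ℝ) < 4 * μ)
      linarith
    push_cast at hip' ⊢
    linarith [hP, hip', hscalar]
  -- base step bound
  have hbase : ∀ v ∈ D, ℓ 1 (w 1) ≤ ℓ 1 v + C ^ 2 / μ := by
    intro v hv
    have hq := hquad 1 le_rfl hT (w 1) v
    simp only [Finset.Icc_self, Finset.sum_singleton, Nat.cast_one, one_mul, one_smul] at hq
    rw [hq]
    have hqb := hgC 1 le_rfl hT (w 1) hw1
    have hip : -(C * ‖v - w 1‖) ≤ ⟪gradient f (x 1) + μ • (w 1 - x 1), v - w 1⟫ := by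
      have h5 := abs_real_inner_le_norm (gradient f (x 1) + μ • (w 1 - x 1)) (v - w 1)
      have h6 := mul_le_mul_of_nonneg_right hqb (norm_nonneg (v - w 1))
      have h7 := neg_abs_le ⟪gradient f (x 1) + μ • (w 1 - x 1), v - w 1⟫
      linarith
    have hr : C ^ 2 = μ * (C ^ 2 / μ) := by field_simp
    nlinarith [hip, sq_nonneg (μ * ‖v - w 1‖ - C), hμ, norm_nonneg (v - w 1)]
  -- FTL regret bound against any comparator
  have key1 : ∀ n, 1 ≤ n → n ≤ T → ∀ v ∈ D,
      (∑ t ∈ Icc 1 n, (t : ℝ) * ℓ t (w t))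
        ≤ (∑ t ∈ Icc 1 n, (t : ℝ) * ℓ t v) + (n : ℝ) * (C ^ 2 / μ) := by
    intro n
    induction n with
    | zero => intro h; exact absurd h (by omega)
    | succ k ih =>
      intro _ hkT v hv
      rcases Nat.eq_zero_or_pos k with hk | hk
      · subst hk
        simp only [zero_add, Finset.Icc_self, Finset.sum_singleton, Nat.cast_one, one_mul]
        have h := hbase v hv
        linarith
      · have ihw := ih hk (by omega) (w (k + 1)) (hwD (k + 1) (by omega) hkT)
        have hs := hstep k hk (by omega) v hv
        rw [Finset.sum_Icc_succ_top (by omega : 1 ≤ k + 1) (fun t : ℕ => (t : ℝ) * ℓ t (w t))]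
        rw [Finset.sum_Icc_succ_top (by omega : 1 ≤ k + 1)
          (fun t : ℕ => (t : ℝ) * ℓ t (w (k + 1)))] at hs
        push_cast at ihw hs ⊢
        linarith
  -- online-to-batch conversion
  have key2 : ∀ n, 1 ≤ n → n ≤ T →
      (∑ i ∈ Icc 1 n, (i : ℝ)) * (f (x n) - f xstar)
        ≤ ∑ t ∈ Icc 1 n, (t : ℝ) * (ℓ t (w t) - ℓ t xstar) := by
    intro n
    induction n with
    | zero => intro h; exact absurd h (by omega)
    | succ k ih =>
      intro _ hkT
      rcases Nat.eq_zero_or_pos k with hk | hk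
      · subst hk
        simp only [zero_add, Finset.Icc_self, Finset.sum_singleton, Nat.cast_one, one_mul]
        have hx1 : x 1 = w 1 := by
          rw [hx 1 le_rfl hT]
          simp
        have hsc := hstrong (x 1) (xstar - x 1)
        have he : x 1 + (xstar - x 1) = xstar := by abel
        rw [he] at hsc
        rw [hℓ 1 le_rfl hT (w 1), hℓ 1 le_rfl hT xstar, ← hx1]
        have hi : ⟪gradient f (x 1), xstar - x 1⟫
            = ⟪gradient f (x 1), xstar⟫ - ⟪gradient f (x 1), x 1⟫ := inner_sub_right _ _ _
        simp only [sub_self, norm_zero]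
        nlinarith [hsc, hi]
      · have h1k : 1 ≤ k := hk
        have hkT' : k ≤ T := by omega
        have ih' := ih h1k hkT'
        have hPk : (∑ i ∈ Icc 1 k, (i : ℝ)) • x k = ∑ i ∈ Icc 1 k, (i : ℝ) • w i := by
          rw [hx k h1k hkT']
          exact smul_inv_smul₀ (ne_of_gt (hApos k h1k)) _
        have hPk1 : (∑ i ∈ Icc 1 (k + 1), (i : ℝ)) • x (k + 1)
            = ∑ i ∈ Icc 1 (k + 1), (i : ℝ) • w i := by
          rw [hx (k + 1) (by omega) hkT]
          exact smul_inv_smul₀ (ne_of_gt (hApos (k + 1) (by omega))) _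
        have hS : (∑ i ∈ Icc 1 (k + 1), (i : ℝ))
            = (∑ i ∈ Icc 1 k, (i : ℝ)) + ((k + 1 : ℕ) : ℝ) :=
          Finset.sum_Icc_succ_top (by omega) _
        have hsumw : (∑ i ∈ Icc 1 (k + 1), (i : ℝ) • w i)
            = (∑ i ∈ Icc 1 k, (i : ℝ) • w i) + ((k + 1 : ℕ) : ℝ) • w (k + 1) :=
          Finset.sum_Icc_succ_top (by omega) _
        have hrec : ((∑ i ∈ Icc 1 k, (i : ℝ)) + ((k + 1 : ℕ) : ℝ)) • x (k + 1)
            = (∑ i ∈ Icc 1 k, (i : ℝ)) • x k + ((k + 1 : ℕ) : ℝ) • w (k + 1) := by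
          rw [← hS, hPk1, hsumw, hPk]
        have hvec : (∑ i ∈ Icc 1 k, (i : ℝ)) • (x k - x (k + 1))
            + ((k + 1 : ℕ) : ℝ) • (xstar - x (k + 1))
            + ((k + 1 : ℕ) : ℝ) • (w (k + 1) - xstar)
            = ((∑ i ∈ Icc 1 k, (i : ℝ)) • x k + ((k + 1 : ℕ) : ℝ) • w (k + 1))
              - ((∑ i ∈ Icc 1 k, (i : ℝ)) + ((k + 1 : ℕ) : ℝ)) • x (k + 1) := by
          simp only [smul_sub, smul_add, add_smul]
          abel
        rw [← hrec, sub_self] at hvec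
        have hinner := congrArg (fun z : E => ⟪gradient f (x (k + 1)), z⟫) hvec
        simp only [inner_add_right, real_inner_smul_right, inner_zero_right] at hinner
        have hsc1 := hstrong (x (k + 1)) (xstar - x (k + 1))
        have he1 : x (k + 1) + (xstar - x (k + 1)) = xstar := by abel
        rw [he1] at hsc1
        have hsc2 := hstrong (x (k + 1)) (x k - x (k + 1))
        have he2 : x (k + 1) + (x k - x (k + 1)) = x k := by abel
        rw [he2] at hsc2
        have hS0 : (0 : ℝ) ≤ ∑ i ∈ Icc 1 k, (i : ℝ) := (hApos k h1k).le
        have hm0 : (0 : ℝ) ≤ ((k + 1 : ℕ) : ℝ) := Nat.cast_nonneg _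
        have hsc1' := mul_le_mul_of_nonneg_left hsc1.le hm0
        have hsc2' := mul_le_mul_of_nonneg_left hsc2.le hS0
        have he3 : ((k + 1 : ℕ) : ℝ) * (ℓ (k + 1) (w (k + 1)) - ℓ (k + 1) xstar)
            = ((k + 1 : ℕ) : ℝ) * ⟪gradient f (x (k + 1)), w (k + 1) - xstar⟫
              + ((k + 1 : ℕ) : ℝ) * (μ / 2 * ‖w (k + 1) - x (k + 1)‖ ^ 2)
              - ((k + 1 : ℕ) : ℝ) * (μ / 2 * ‖xstar - x (k + 1)‖ ^ 2) := by
          rw [hℓ (k + 1) (by omega) hkT (w (k + 1)), hℓ (k + 1) (by omega) hkT xstar,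
            inner_sub_right]
          ring
        have hn1 : (0 : ℝ) ≤ (∑ i ∈ Icc 1 k, (i : ℝ)) * (μ / 2 * ‖x k - x (k + 1)‖ ^ 2) := by
          apply mul_nonneg hS0
          exact mul_nonneg (by linarith) (sq_nonneg _)
        have hn2 : (0 : ℝ) ≤ ((k + 1 : ℕ) : ℝ) * (μ / 2 * ‖w (k + 1) - x (k + 1)‖ ^ 2) := by
          apply mul_nonneg hm0
          exact mul_nonneg (by linarith) (sq_nonneg _)
        rw [Finset.sum_Icc_succ_top (by omega : 1 ≤ k + 1)
          (fun t : ℕ => (t : ℝ) * (ℓ t (w t) - ℓ t xstar)), hS]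
        nlinarith [ih', hsc1', hsc2', hinner, he3, hn1, hn2]
  -- conclusion
  have ha : ∑ t ∈ Icc 1 T, (t : ℝ) * (ℓ t (w t) - ℓ t xstar) ≤ T * C ^ 2 / μ := by
    have h := key1 T hT le_rfl xstar hxstar
    have hsplit : ∑ t ∈ Icc 1 T, (t : ℝ) * (ℓ t (w t) - ℓ t xstar)
        = (∑ t ∈ Icc 1 T, (t : ℝ) * ℓ t (w t)) - ∑ t ∈ Icc 1 T, (t : ℝ) * ℓ t xstar := by
      rw [← Finset.sum_sub_distrib]
      exact Finset.sum_congr rfl fun i _ => by ring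
    have hbr : (T : ℝ) * (C ^ 2 / μ) = (T : ℝ) * C ^ 2 / μ := by ring
    rw [hsplit]
    linarith
  refine ⟨ha, ?_⟩
  have hb := key2 T hT le_rfl
  have hSTpos := hApos T hT
  have hT1 : (1 : ℝ) ≤ (T : ℝ) := by exact_mod_cast hT
  have h3 : f (x T) - f xstar ≤ (T * C ^ 2 / μ) / (∑ i ∈ Icc 1 T, (i : ℝ)) := by
    rw [le_div_iff₀ hSTpos]
    calc (f (x T) - f xstar) * (∑ i ∈ Icc 1 T, (i : ℝ))
        = (∑ i ∈ Icc 1 T, (i : ℝ)) * (f (x T) - f xstar) := by ring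
      _ ≤ ∑ t ∈ Icc 1 T, (t : ℝ) * (ℓ t (w t) - ℓ t xstar) := hb
      _ ≤ T * C ^ 2 / μ := ha
  have h4 : (T * C ^ 2 / μ) / (∑ i ∈ Icc 1 T, (i : ℝ)) = 2 * C ^ 2 / (μ * (T + 1)) := by
    rw [hAval T]
    have hTne : (T : ℝ) ≠ 0 := by linarith
    have hT1ne : (T : ℝ) + 1 ≠ 0 := by linarith
    field_simp
  rw [h4] at h3
  exact h3
end

section
/- (Theorem 11, deterministic version: universality of the accelerated algorithm on non-smooth losses.) Let H be a real Hilbert space, B > 0, and D = {w ∈ H : ‖w‖ ≤ B/2}. Let ℒ : H → ℝ be convex and differentiable, and let x⋆ ∈ H satisfy ‖x⋆‖ ≤ B/2. Set α_t = t, β_t = α_{1:t} = t(t+1)/2, τ_t = α_t/α_{1:t}. Given w_1,…,w_T ∈ D, define recursively: y_0 = w_1, x_t = (1 − τ_t) y_{t−1} + τ_t w_t, g_t = ∇ℒ(x_t), η_t = 2B/√(1 + Σ_{i=1}^t β_i ‖g_i‖²), and y_t = x_t − η_t g_t. Suppose ‖g_t‖ ≤ G for all t, and let R_T = Σ_{t=1}^T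 α_t ⟨g_t, w_t − x⋆⟩. Then ℒ(y_T) − ℒ(x⋆) ≤ (R_T + 2B √(Σ_{t=1}^T β_t ‖∇ℒ(y_t)‖² · log(1 + G²T³))) / α_{1:T}. -/
open scoped RealInnerProductSpace

lemma convex_grad_ineq {H : Type*} [NormedAddCommGroup H] [InnerProductSpace ℝ H] [CompleteSpace H]
    (f : H → ℝ) (hconv : ConvexOn ℝ Set.univ f) (hdiff : Differentiable ℝ f)
    (u v : H) : f u - f v ≤ ⟪gradient f u, u - v⟫ := by
  set A : ℝ →ᵃ[ℝ] H := AffineMap.lineMap v u with hA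
  have hφc : ConvexOn ℝ Set.univ (f ∘ A) := by
    simpa using hconv.comp_affineMap A
  have hfd : HasFDerivAt f (InnerProductSpace.toDual ℝ H (gradient f u)) u :=
    (hasGradientAt_iff_hasFDerivAt).mp (hdiff u).hasGradientAt
  have hAd : HasDerivAt (fun s : ℝ => A s) (u - v) (1 : ℝ) := by
    have := A.hasDerivAt (x := (1:ℝ))
    simpa [hA, AffineMap.lineMap_linear] using this
  have hcomp : HasDerivAt (f ∘ A) ⟪gradient f u, u - v⟫ (1 : ℝ) := by
    have h1 : A (1:ℝ) = u := AffineMap.lineMap_apply_one v u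
    have hfd' : HasFDerivAt f (InnerProductSpace.toDual ℝ H (gradient f u)) (A 1) := by
      rw [h1]; exact hfd
    have := hfd'.comp_hasDerivAt (1 : ℝ) hAd
    simpa [InnerProductSpace.toDual_apply_apply] using this
  have := hφc.slope_le_of_hasDerivAt (Set.mem_univ (0:ℝ)) (Set.mem_univ (1:ℝ)) one_pos hcomp
  rw [slope_def_field] at this
  simpa [A, AffineMap.lineMap_apply] using this

lemma sum_div_le_log (a : ℕ → ℝ) (ha : ∀ i, 0 ≤ a i) (n : ℕ) :
    (∑ t ∈ Finset.Icc 1 n, a t / (1 + ∑ i ∈ Finset.Icc 1 t, a i))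
      ≤ Real.log (1 + ∑ i ∈ Finset.Icc 1 n, a i) := by
  induction n with
  | zero => simp
  | succ n ih =>
    have hS : ∀ m : ℕ, 0 ≤ ∑ i ∈ Finset.Icc 1 m, a i :=
      fun m => Finset.sum_nonneg fun i _ => ha i
    have h1n : (1 : ℕ) ≤ n + 1 := Nat.succ_le_succ (Nat.zero_le n)
    rw [Finset.sum_Icc_succ_top h1n, Finset.sum_Icc_succ_top h1n]
    have h1 : (0:ℝ) < 1 + ∑ i ∈ Finset.Icc 1 n, a i := by linarith [hS n]
    have h2 : (0:ℝ) < 1 + ((∑ i ∈ Finset.Icc 1 n, a i) + a (n+1)) := by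
      linarith [hS n, ha (n+1)]
    have hlog : a (n+1) / (1 + ((∑ i ∈ Finset.Icc 1 n, a i) + a (n+1)))
        ≤ Real.log (1 + ((∑ i ∈ Finset.Icc 1 n, a i) + a (n+1)))
          - Real.log (1 + ∑ i ∈ Finset.Icc 1 n, a i) := by
      have hd := Real.log_le_sub_one_of_pos (div_pos h1 h2)
      rw [Real.log_div (ne_of_gt h1) (ne_of_gt h2)] at hd
      have hq : (1 + ∑ i ∈ Finset.Icc 1 n, a i) / (1 + ((∑ i ∈ Finset.Icc 1 n, a i) + a (n+1)))
          - 1 = -(a (n+1) / (1 + ((∑ i ∈ Finset.Icc 1 n, a i) + a (n+1)))) := by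
        field_simp
        ring
      linarith [hd, hq.le, hq.ge]
    linarith [ih, hlog]

set_option maxHeartbeats 1000000 in
/-- Theorem 11, deterministic version: universality of the accelerated
algorithm on non-smooth losses. -/
theorem adaptive_acceleration_universal_deterministic
    {H : Type*} [NormedAddCommGroup H] [InnerProductSpace ℝ H] [CompleteSpace H]
    (B : ℝ) (hB : 0 < B)
    (G : ℝ)
    (f : H → ℝ) (hconv : ConvexOn ℝ Set.univ f) (hdiff : Differentiable ℝ f)
    (xstar : H) (hxstar : ‖xstar‖ ≤ B / 2)
    (T : ℕ) (hT : 1 ≤ T)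
    (w : ℕ → H) (hw : ∀ t, 1 ≤ t → t ≤ T → ‖w t‖ ≤ B / 2)
    (β τ η : ℕ → ℝ) (x y : ℕ → H) (g : ℕ → H)
    (hβ : ∀ t, β t = (t : ℝ) * (t + 1) / 2)
    (hτ : ∀ t, 1 ≤ t → t ≤ T → τ t = (t : ℝ) / β t)
    (hy0 : y 0 = w 1)
    (hxdef : ∀ t, 1 ≤ t → t ≤ T → x t = (1 - τ t) • y (t - 1) + τ t • w t)
    (hg : ∀ t, 1 ≤ t → t ≤ T → g t = gradient f (x t))
    (hη : ∀ t, 1 ≤ t → t ≤ T →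
      η t = 2 * B / Real.sqrt (1 + ∑ i ∈ Finset.Icc 1 t, β i * ‖g i‖ ^ 2))
    (hydef : ∀ t, 1 ≤ t → t ≤ T → y t = x t - η t • g t)
    (hG : ∀ t, 1 ≤ t → t ≤ T → ‖g t‖ ≤ G) :
    f (y T) - f xstar
      ≤ ((∑ t ∈ Finset.Icc 1 T, (t : ℝ) * ⟪g t, w t - xstar⟫)
          + 2 * B * Real.sqrt ((∑ t ∈ Finset.Icc 1 T, β t * ‖gradient f (y t)‖ ^ 2)
              * Real.log (1 + G ^ 2 * (T : ℝ) ^ 3)))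
        / ((T : ℝ) * (T + 1) / 2) := by
  -- notation
  set N : ℕ → ℝ := fun t => ‖gradient f (y t)‖ with hN
  set S : ℕ → ℝ := fun t => ∑ i ∈ Finset.Icc 1 t, β i * ‖g i‖ ^ 2 with hS
  have hβnn : ∀ t : ℕ, 0 ≤ β t := by
    intro t; rw [hβ]; positivity
  have hβ0 : β 0 = 0 := by rw [hβ]; norm_num
  have hSnn : ∀ t : ℕ, 0 ≤ S t := by
    intro t
    exact Finset.sum_nonneg fun i _ => mul_nonneg (hβnn i) (by positivity)
  have hSpos : ∀ t : ℕ, (0:ℝ) < 1 + S t := fun t => by linarith [hSnn t]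
  have hηnn : ∀ t, 1 ≤ t → t ≤ T → 0 ≤ η t := by
    intro t h1 h2
    rw [hη t h1 h2]
    positivity
  have hη2 : ∀ t, 1 ≤ t → t ≤ T → η t ^ 2 = 4 * B ^ 2 / (1 + S t) := by
    intro t h1 h2
    rw [hη t h1 h2, div_pow, Real.sq_sqrt (hSpos t).le]
    ring_nf
  -- per-step convexity bound on f (y t) - f (x t)
  have hfy : ∀ t, 1 ≤ t → t ≤ T → f (y t) - f (x t) ≤ η t * (N t * ‖g t‖) := by
    intro t h1 h2
    have hc := convex_grad_ineq f hconv hdiff (y t) (x t)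
    have hsub : y t - x t = -(η t • g t) := by rw [hydef t h1 h2]; abel
    rw [hsub, inner_neg_right, real_inner_smul_right] at hc
    have habs : |⟪gradient f (y t), g t⟫| ≤ N t * ‖g t‖ := abs_real_inner_le_norm _ _
    have h3 : -⟪gradient f (y t), g t⟫ ≤ N t * ‖g t‖ := by
      have := neg_abs_le ⟪gradient f (y t), g t⟫
      linarith
    calc f (y t) - f (x t) ≤ -(η t * ⟪gradient f (y t), g t⟫) := hc
      _ = η t * (-⟪gradient f (y t), g t⟫) := by ring
      _ ≤ η t * (N t * ‖g t‖) := mul_le_mul_of_nonneg_left h3 (hηnn t h1 h2)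
  -- main induction
  have key : ∀ n : ℕ, n ≤ T →
      β n * (f (y n) - f xstar)
        ≤ (∑ t ∈ Finset.Icc 1 n, (t : ℝ) * ⟪g t, w t - xstar⟫)
          + ∑ t ∈ Finset.Icc 1 n, β t * (η t * (N t * ‖g t‖)) := by
    intro n
    induction n with
    | zero => intro _; simp [hβ0]
    | succ n ih =>
      intro hn1
      have ihn := ih (le_trans (Nat.le_succ n) hn1)
      have h1n : (1 : ℕ) ≤ n + 1 := Nat.succ_le_succ (Nat.zero_le n)
      have htT : n + 1 ≤ T := hn1
      have htpos : (0:ℝ) < ((n+1 : ℕ) : ℝ) := by positivity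
      have hβt_pos : (0:ℝ) < β (n+1) := by
        rw [hβ]; push_cast; positivity
      have hβsum : β (n+1) = β n + ((n+1 : ℕ) : ℝ) := by
        rw [hβ, hβ]; push_cast; ring
      have hcval : τ (n+1) = ((n+1 : ℕ) : ℝ) / β (n+1) := hτ (n+1) h1n htT
      have hc1 : β (n+1) * τ (n+1) = ((n+1 : ℕ) : ℝ) := by
        rw [hcval]; field_simp
      have hc2 : β (n+1) * (1 - τ (n+1)) = β n := by
        rw [hcval]
        field_simp
        rw [hβ, hβ]; push_cast; ring
      have hx : x (n+1) = (1 - τ (n+1)) • y n + τ (n+1) • w (n+1) := by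
        have := hxdef (n+1) h1n htT
        simpa using this
      -- vector identity
      have hβsum' : β (n+1) = β n + ((n : ℝ) + 1) := by push_cast at hβsum ⊢; linarith
      have hc1' : β (n+1) * τ (n+1) = (n : ℝ) + 1 := by push_cast at hc1 ⊢; linarith
      have hvec : β n • (x (n+1) - y n) + ((n+1 : ℕ) : ℝ) • (x (n+1) - xstar)
          = ((n+1 : ℕ) : ℝ) • (w (n+1) - xstar) := by
        rw [hx]
        match_scalars <;> push_cast
        · linear_combination τ (n+1) * hβsum' - hc1'
        · linear_combination hc1' - τ (n+1) * hβsum'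
        · ring
      have hfx1 : f (x (n+1)) - f (y n) ≤ ⟪g (n+1), x (n+1) - y n⟫ := by
        rw [hg (n+1) h1n htT]
        exact convex_grad_ineq f hconv hdiff _ _
      have hfx2 : f (x (n+1)) - f xstar ≤ ⟪g (n+1), x (n+1) - xstar⟫ := by
        rw [hg (n+1) h1n htT]
        exact convex_grad_ineq f hconv hdiff _ _
      have hinner : β n * ⟪g (n+1), x (n+1) - y n⟫
            + ((n+1 : ℕ) : ℝ) * ⟪g (n+1), x (n+1) - xstar⟫
          = ((n+1 : ℕ) : ℝ) * ⟪g (n+1), w (n+1) - xstar⟫ := by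
        rw [← real_inner_smul_right, ← real_inner_smul_right, ← real_inner_smul_right,
          ← inner_add_right, hvec]
      have hfyt := hfy (n+1) h1n htT
      have e1 : β (n+1) * (f (y (n+1)) - f xstar)
          = β (n+1) * (f (y (n+1)) - f (x (n+1))) + β n * (f (x (n+1)) - f (y n))
            + ((n+1 : ℕ) : ℝ) * (f (x (n+1)) - f xstar) + β n * (f (y n) - f xstar) := by
        rw [hβsum]; ring
      rw [Finset.sum_Icc_succ_top h1n, Finset.sum_Icc_succ_top h1n]
      have b1 : β (n+1) * (f (y (n+1)) - f (x (n+1))) ≤ β (n+1) * (η (n+1) * (N (n+1) * ‖g (n+1)‖)) :=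
        mul_le_mul_of_nonneg_left hfyt (hβnn (n+1))
      have b2 : β n * (f (x (n+1)) - f (y n)) ≤ β n * ⟪g (n+1), x (n+1) - y n⟫ :=
        mul_le_mul_of_nonneg_left hfx1 (hβnn n)
      have b3 : ((n+1 : ℕ) : ℝ) * (f (x (n+1)) - f xstar)
          ≤ ((n+1 : ℕ) : ℝ) * ⟪g (n+1), x (n+1) - xstar⟫ :=
        mul_le_mul_of_nonneg_left hfx2 htpos.le
      linarith [b1, b2, b3, ihn, hinner, e1.le, e1.ge]
  have keyT := key T le_rfl
  -- bound the error-sum term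
  set P : ℝ := ∑ t ∈ Finset.Icc 1 T, β t * N t ^ 2 with hPdef
  set L : ℝ := Real.log (1 + G ^ 2 * (T : ℝ) ^ 3) with hLdef
  set K : ℝ := ∑ t ∈ Finset.Icc 1 T, β t * (η t * (N t * ‖g t‖)) with hKdef
  have hPnn : 0 ≤ P := by
    exact Finset.sum_nonneg fun t _ => mul_nonneg (hβnn t) (by positivity)
  have hmem : ∀ t ∈ Finset.Icc 1 T, 1 ≤ t ∧ t ≤ T := by
    intro t ht; exact Finset.mem_Icc.mp ht
  have hKnn : 0 ≤ K := by
    refine Finset.sum_nonneg fun t ht => ?_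
    obtain ⟨h1, h2⟩ := hmem t ht
    exact mul_nonneg (hβnn t) (mul_nonneg (hηnn t h1 h2)
      (mul_nonneg (norm_nonneg _) (norm_nonneg _)))
  -- Cauchy-Schwarz
  set Q : ℝ := ∑ t ∈ Finset.Icc 1 T, β t * (η t ^ 2 * ‖g t‖ ^ 2) with hQdef
  have hcs : K ^ 2 ≤ P * Q := by
    have hrw : K = ∑ t ∈ Finset.Icc 1 T,
        (Real.sqrt (β t) * N t) * (Real.sqrt (β t) * (η t * ‖g t‖)) := by
      refine Finset.sum_congr rfl fun t ht => ?_
      have h := Real.mul_self_sqrt (hβnn t)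
      calc β t * (η t * (N t * ‖g t‖))
          = (Real.sqrt (β t) * Real.sqrt (β t)) * (η t * (N t * ‖g t‖)) := by rw [h]
        _ = (Real.sqrt (β t) * N t) * (Real.sqrt (β t) * (η t * ‖g t‖)) := by ring
    have hP : P = ∑ t ∈ Finset.Icc 1 T, (Real.sqrt (β t) * N t) ^ 2 := by
      refine Finset.sum_congr rfl fun t ht => ?_
      rw [mul_pow, Real.sq_sqrt (hβnn t)]
    have hQ : Q = ∑ t ∈ Finset.Icc 1 T, (Real.sqrt (β t) * (η t * ‖g t‖)) ^ 2 := by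
      refine Finset.sum_congr rfl fun t ht => ?_
      rw [mul_pow, Real.sq_sqrt (hβnn t), mul_pow]
    rw [hrw, hP, hQ]
    exact Finset.sum_mul_sq_le_sq_mul_sq _ _ _
  -- bound Q
  have hG0 : 0 ≤ G := le_trans (norm_nonneg (g 1)) (hG 1 le_rfl hT)
  have hST : S T ≤ G ^ 2 * (T : ℝ) ^ 3 := by
    have hstep : S T ≤ ∑ t ∈ Finset.Icc 1 T, β t * G ^ 2 := by
      refine Finset.sum_le_sum fun t ht => ?_
      obtain ⟨h1, h2⟩ := hmem t ht
      exact mul_le_mul_of_nonneg_left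
        (pow_le_pow_left₀ (norm_nonneg _) (hG t h1 h2) 2) (hβnn t)
    have hβb : ∀ t ∈ Finset.Icc 1 T, β t ≤ (T : ℝ) * ((T : ℝ) + 1) / 2 := by
      intro t ht
      obtain ⟨h1, h2⟩ := hmem t ht
      rw [hβ]
      have h2' : (t : ℝ) ≤ (T : ℝ) := by exact_mod_cast h2
      have : (0:ℝ) ≤ (t : ℝ) := by positivity
      nlinarith
    have hcard : (Finset.Icc 1 T).card = T := by
      rw [Nat.card_Icc]; omega
    have hsumβ : ∑ t ∈ Finset.Icc 1 T, β t ≤ (T : ℝ) ^ 3 := by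
      have := Finset.sum_le_card_nsmul (Finset.Icc 1 T) β ((T : ℝ) * ((T : ℝ) + 1) / 2) hβb
      rw [hcard, nsmul_eq_mul] at this
      have hT1 : (1:ℝ) ≤ (T : ℝ) := by exact_mod_cast hT
      have hTTT : (T:ℝ) * ((T:ℝ) * ((T:ℝ) + 1) / 2) ≤ (T:ℝ) ^ 3 := by
        nlinarith [sq_nonneg (T:ℝ)]
      linarith
    calc S T ≤ ∑ t ∈ Finset.Icc 1 T, β t * G ^ 2 := hstep
      _ = G ^ 2 * ∑ t ∈ Finset.Icc 1 T, β t := by rw [Finset.mul_sum]; exact Finset.sum_congr rfl fun t _ => by ring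
      _ ≤ G ^ 2 * (T : ℝ) ^ 3 := by nlinarith [hsumβ, sq_nonneg G]
  have hQL : Q ≤ (2 * B) ^ 2 * L := by
    have hrw : Q = (2 * B) ^ 2 * ∑ t ∈ Finset.Icc 1 T,
        (β t * ‖g t‖ ^ 2) / (1 + S t) := by
      rw [Finset.mul_sum]
      refine Finset.sum_congr rfl fun t ht => ?_
      obtain ⟨h1, h2⟩ := hmem t ht
      rw [hη2 t h1 h2]
      field_simp
      ring
    have hlogsum : (∑ t ∈ Finset.Icc 1 T, (β t * ‖g t‖ ^ 2) / (1 + S t))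
        ≤ Real.log (1 + S T) := by
      have := sum_div_le_log (fun i => β i * ‖g i‖ ^ 2)
        (fun i => mul_nonneg (hβnn i) (by positivity)) T
      simpa [hS] using this
    have hlog2 : Real.log (1 + S T) ≤ L := by
      rw [hLdef]
      have : (0:ℝ) < 1 + S T := hSpos T
      exact Real.log_le_log this (by linarith [hST])
    rw [hrw]
    exact mul_le_mul_of_nonneg_left (hlogsum.trans hlog2) (sq_nonneg _)
  -- combine
  have hKle : K ≤ 2 * B * Real.sqrt (P * L) := by
    have h1 : K ^ 2 ≤ P * ((2 * B) ^ 2 * L) := by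
      calc K ^ 2 ≤ P * Q := hcs
        _ ≤ P * ((2 * B) ^ 2 * L) := mul_le_mul_of_nonneg_left hQL hPnn
    have h2 : K = Real.sqrt (K ^ 2) := (Real.sqrt_sq hKnn).symm
    have h3 : P * ((2 * B) ^ 2 * L) = (2 * B) ^ 2 * (P * L) := by ring
    calc K = Real.sqrt (K ^ 2) := h2
      _ ≤ Real.sqrt ((2 * B) ^ 2 * (P * L)) := by
          apply Real.sqrt_le_sqrt; rw [← h3]; exact h1
      _ = 2 * B * Real.sqrt (P * L) := by
          rw [Real.sqrt_mul (sq_nonneg _), Real.sqrt_sq (by positivity : (0:ℝ) ≤ 2 * B)]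
  -- finish
  have hden : (0:ℝ) < (T : ℝ) * ((T : ℝ) + 1) / 2 := by
    have hT1 : (1:ℝ) ≤ (T : ℝ) := by exact_mod_cast hT
    nlinarith
  rw [le_div_iff₀ hden]
  have hβT : β T = (T : ℝ) * ((T : ℝ) + 1) / 2 := hβ T
  have := keyT
  rw [hβT] at this
  have hfinal : (∑ t ∈ Finset.Icc 1 T, (t : ℝ) * ⟪g t, w t - xstar⟫) + K
      ≤ (∑ t ∈ Finset.Icc 1 T, (t : ℝ) * ⟪g t, w t - xstar⟫) + 2 * B * Real.sqrt (P * L) := by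
    linarith [hKle]
  linarith [this, hfinal]
end
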